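/- arXiv:1201.1338 — 8 statements merged into one kernel-verified Lean document; each statement's English description precedes it below -/
import Mathlib

section
/- The subspace H ⊕ ℂC_{LI} ⊕ ℂC_L, where H = (⊕_{n∈ℤ} ℂI_n) ⊕ ℂC_I is the Heisenberg subalgebra, is the unique maximal proper ideal of the twisted Heisenberg-Virasoro algebra 𝔏. -/
/-- Index type for the standard basis of the twisted Heisenberg-Virasoro algebra. -/
inductive HVIx : Type
  | l : ℤ → HVIx
  | i : ℤ → HVIx
  | cl : HVIx
  | ci : HVIx
  | cli : HVIx

/-- A complex Lie algebra `𝔏` equipped with the structure of the twisted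
Heisenberg-Virasoro algebra: a basis `{L_m, I_m, C_L, C_I, C_LI}` with the
defining Lie brackets. -/
structure THV (𝔏 : Type*) [LieRing 𝔏] [LieAlgebra ℂ 𝔏] where
  b : Module.Basis HVIx ℂ 𝔏
  bracket_LL : ∀ m n : ℤ, ⁅b (.l m), b (.l n)⁆ =
    ((n : ℂ) - (m : ℂ)) • b (.l (m + n)) +
      (if m + n = 0 then (((m : ℂ) ^ 3 - (m : ℂ)) / 12) • b .cl else 0)
  bracket_II : ∀ m n : ℤ, ⁅b (.i m), b (.i n)⁆ =
    (if m + n = 0 then (n : ℂ) • b .ci else 0)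
  bracket_LI : ∀ m n : ℤ, ⁅b (.l m), b (.i n)⁆ =
    (n : ℂ) • b (.i (m + n)) +
      (if m + n = 0 then ((m : ℂ) ^ 2 - (m : ℂ)) • b .cli else 0)
  central_CL : ∀ x : 𝔏, ⁅x, b .cl⁆ = 0
  central_CI : ∀ x : 𝔏, ⁅x, b .ci⁆ = 0
  central_CLI : ∀ x : 𝔏, ⁅x, b .cli⁆ = 0

namespace THV

variable {𝔏 : Type*} [LieRing 𝔏] [LieAlgebra ℂ 𝔏] (s : THV 𝔏)

/-- The element `L n`. -/
noncomputable def L (n : ℤ) : 𝔏 := s.b (.l n)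
/-- The element `I n`. -/
noncomputable def I (n : ℤ) : 𝔏 := s.b (.i n)
/-- The central element `C_L`. -/
noncomputable def CL : 𝔏 := s.b .cl
/-- The central element `C_I`. -/
noncomputable def CI : 𝔏 := s.b .ci
/-- The central element `C_LI`. -/
noncomputable def CLI : 𝔏 := s.b .cli

end THV

/-- `θ` is a conjugate-linear anti-involution of the complex Lie algebra `𝔤`. -/
structure IsConjAntiInvol (𝔤 : Type*) [LieRing 𝔤] [LieAlgebra ℂ 𝔤] (θ : 𝔤 → 𝔤) : Prop where
  map_add : ∀ x y : 𝔤, θ (x + y) = θ x + θ y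
  map_smul : ∀ (c : ℂ) (x : 𝔤), θ (c • x) = (starRingEnd ℂ) c • θ x
  map_bracket : ∀ x y : 𝔤, θ ⁅x, y⁆ = ⁅θ y, θ x⁆
  invol : ∀ x : 𝔤, θ (θ x) = x

/-- A `𝔤`-module `V` is unitary with respect to `θ` if there is a positive definite
Hermitian form `⟨·,·⟩` (linear in the first argument) with `⟨x·u, v⟩ = ⟨u, θ(x)·v⟩`. -/
def IsUnitaryWith (𝔤 : Type*) [LieRing 𝔤] [LieAlgebra ℂ 𝔤]
    (V : Type*) [AddCommGroup V] [Module ℂ V] [LieRingModule 𝔤 V]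
    (θ : 𝔤 → 𝔤) : Prop :=
  ∃ B : V → V → ℂ,
    (∀ u v w : V, B (u + v) w = B u w + B v w) ∧
    (∀ (c : ℂ) (u v : V), B (c • u) v = c * B u v) ∧
    (∀ u v : V, B v u = (starRingEnd ℂ) (B u v)) ∧
    (∀ v : V, v ≠ 0 → 0 < (B v v).re) ∧
    (∀ (x : 𝔤) (u v : V), B ⁅x, u⁆ v = B u ⁅θ x, v⁆)


deriving instance DecidableEq for HVIx

namespace THVAux

/-- The weight of a basis index under `ad L₀`. -/
def wt : HVIx → ℤ
  | .l n => n
  | .i n => n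
  | _ => 0

variable {𝔏 : Type*} [LieRing 𝔏] [LieAlgebra ℂ 𝔏] (s : THV 𝔏)

lemma mem_top_span (x : 𝔏) : x ∈ Submodule.span ℂ (Set.range s.b) := by
  rw [s.b.span_eq]; trivial

lemma lie_L0 (k : HVIx) : ⁅s.b (.l 0), s.b k⁆ = (wt k : ℂ) • s.b k := by
  cases k with
  | l n => rw [s.bracket_LL]; norm_num [wt]
  | i n => rw [s.bracket_LI]; norm_num [wt]
  | cl => rw [s.central_CL]; norm_num [wt]
  | ci => rw [s.central_CI]; norm_num [wt]
  | cli => rw [s.central_CLI]; norm_num [wt]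

lemma repr_lie_L0 (k : HVIx) (x : 𝔏) :
    s.b.repr ⁅s.b (.l 0), x⁆ k = (wt k : ℂ) * s.b.repr x k := by
  induction mem_top_span s x using Submodule.span_induction with
  | mem z hz =>
    obtain ⟨j, rfl⟩ := hz
    rw [lie_L0, map_smul, Module.Basis.repr_self]
    simp only [Finsupp.smul_apply, Finsupp.single_apply, smul_eq_mul]
    split_ifs with h
    · subst h; ring
    · ring
  | zero => simp
  | add p q hp hq ihp ihq =>
    rw [lie_add, map_add]; simp only [Finsupp.add_apply, map_add]; rw [ihp, ihq]; ring
  | smul c p hp ih =>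
    rw [lie_smul, map_smul, map_smul]
    simp only [Finsupp.smul_apply, smul_eq_mul]; rw [ih]; ring

lemma exists_filtered (J : LieIdeal ℂ 𝔏) (x : 𝔏) (hx : x ∈ J) (W : Finset ℤ) :
    ∃ y ∈ J, ∀ k, s.b.repr y k = (∏ w ∈ W, ((wt k : ℂ) - (w : ℂ))) * s.b.repr x k := by
  classical
  induction W using Finset.induction with
  | empty => exact ⟨x, hx, fun k => by simp⟩
  | @insert a W ha ih =>
    obtain ⟨y, hyJ, hy⟩ := ih
    refine ⟨⁅s.b (.l 0), y⁆ - (a : ℂ) • y, ?_, fun k => ?_⟩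
    · exact sub_mem (lie_mem_right ℂ 𝔏 J _ _ hyJ) (SMulMemClass.smul_mem _ hyJ)
    · rw [map_sub, Finsupp.sub_apply, repr_lie_L0, map_smul, Finsupp.smul_apply, hy,
        Finset.prod_insert ha, smul_eq_mul]
      ring

end THVAux

/-- `H ⊕ ℂC_LI ⊕ ℂC_L`, where `H = (⊕ₙ ℂI_n) ⊕ ℂC_I` is the Heisenberg subalgebra,
is the unique maximal proper ideal of the twisted Heisenberg-Virasoro algebra `𝔏`. -/


theorem unique_maximal_ideal (𝔏 : Type*) [LieRing 𝔏] [LieAlgebra ℂ 𝔏] (s : THV 𝔏) :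
    ∃ M : LieIdeal ℂ 𝔏,
      (M : Submodule ℂ 𝔏) =
        Submodule.span ℂ (Set.range s.I ∪ {s.CI, s.CLI, s.CL}) ∧
      M ≠ ⊤ ∧
      ∀ J : LieIdeal ℂ 𝔏, J ≠ ⊤ → J ≤ M := by
  classical
  set T : Set HVIx := Set.range HVIx.i ∪ {HVIx.ci, HVIx.cli, HVIx.cl} with hT
  set P : Submodule ℂ 𝔏 := Submodule.span ℂ (s.b '' T) with hP
  have hmemP : ∀ k ∈ T, s.b k ∈ P := fun k hk => Submodule.subset_span ⟨k, hk, rfl⟩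
  have hiT : ∀ n : ℤ, HVIx.i n ∈ T := fun n => Or.inl ⟨n, rfl⟩
  have hciT : HVIx.ci ∈ T := Or.inr (by simp)
  have hcliT : HVIx.cli ∈ T := Or.inr (by simp)
  have hclT : HVIx.cl ∈ T := Or.inr (by simp)
  have hgen : Set.range s.I ∪ {s.CI, s.CLI, s.CL} = s.b '' T := by
    rw [hT, Set.image_union]
    congr 1
    · rw [← Set.range_comp]; rfl
    · simp [THV.CI, THV.CLI, THV.CL, Set.image_insert_eq]
  have key1 : ∀ (n : ℤ) (x : 𝔏), ⁅x, s.b (.i n)⁆ ∈ P := by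
    intro n x
    induction THVAux.mem_top_span s x using Submodule.span_induction with
    | mem z hz =>
      obtain ⟨j, rfl⟩ := hz
      cases j with
      | l p =>
        rw [s.bracket_LI]
        refine add_mem (P.smul_mem _ (hmemP _ (hiT _))) ?_
        split_ifs
        · exact P.smul_mem _ (hmemP _ hcliT)
        · exact P.zero_mem
      | i p =>
        rw [s.bracket_II]
        split_ifs
        · exact P.smul_mem _ (hmemP _ hciT)
        · exact P.zero_mem
      | cl => rw [← lie_skew, s.central_CL, neg_zero]; exact P.zero_mem
      | ci => rw [← lie_skew, s.central_CI, neg_zero]; exact P.zero_mem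
      | cli => rw [← lie_skew, s.central_CLI, neg_zero]; exact P.zero_mem
    | zero => rw [zero_lie]; exact P.zero_mem
    | add p q hp hq ihp ihq => rw [add_lie]; exact add_mem ihp ihq
    | smul c p hp ih => rw [smul_lie]; exact P.smul_mem _ ih
  have hlie : ∀ (x m : 𝔏), m ∈ P → ⁅x, m⁆ ∈ P := by
    intro x m hm
    rw [hP] at hm
    induction hm using Submodule.span_induction with
    | mem z hz =>
      obtain ⟨k, hk, rfl⟩ := hz
      cases k with
      | l p => exact absurd hk (by rw [hT] at *; simp at hk)
      | i p => exact key1 p x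
      | cl => rw [s.central_CL]; exact P.zero_mem
      | ci => rw [s.central_CI]; exact P.zero_mem
      | cli => rw [s.central_CLI]; exact P.zero_mem
    | zero => rw [lie_zero]; exact P.zero_mem
    | add p q hp hq ihp ihq => rw [lie_add]; exact add_mem ihp ihq
    | smul c p hp ih => rw [lie_smul]; exact P.smul_mem _ ih
  refine ⟨{ toSubmodule := P, lie_mem := fun {x y} hy => hlie x y hy }, ?_, ?_, ?_⟩
  · rw [hgen]; rfl
  · intro htop
    have hPtop : P = ⊤ := by
      have := congrArg (fun N : LieIdeal ℂ 𝔏 => (N : Submodule ℂ 𝔏)) htop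
      simpa using this
    have hmem : s.b (HVIx.l 0) ∈ P := hPtop ▸ Submodule.mem_top
    have h0 : HVIx.l 0 ∈ T := by
      rw [hP] at hmem
      have h2 := (Module.Basis.mem_span_image s.b).mp hmem
      apply h2
      simp [Module.Basis.repr_self, Finsupp.support_single_ne_zero]
    rw [hT] at h0
    simp at h0
  · intro J hJ
    intro x hxJ
    by_contra hxM
    have hxP : x ∉ P := hxM
    exfalso
    apply hJ
    -- find a nonzero `L`-coefficient in `x`
    have hl : ∃ m : ℤ, s.b.repr x (HVIx.l m) ≠ 0 := by
      by_contra hno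
      push_neg at hno
      apply hxP
      rw [hP, Module.Basis.mem_span_image]
      intro k hk
      simp only [Finset.mem_coe, Finsupp.mem_support_iff] at hk
      cases k with
      | l n => exact absurd (hno n) hk
      | i n => exact hiT n
      | cl => exact hclT
      | ci => exact hciT
      | cli => exact hcliT
    obtain ⟨m, hm⟩ := hl
    obtain ⟨y, hyJ, hy⟩ := THVAux.exists_filtered s J x hxJ
      (((s.b.repr x).support.image THVAux.wt).erase m)
    set a := s.b.repr y (HVIx.l m) with ha
    set bb := s.b.repr y (HVIx.i m) with hbb
    have ha0 : a ≠ 0 := by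
      rw [ha, hy]
      apply mul_ne_zero _ hm
      rw [Finset.prod_ne_zero_iff]
      intro w hw
      have hwm : THVAux.wt (HVIx.l m) ≠ w := by
        simp only [THVAux.wt]
        exact (Finset.ne_of_mem_erase hw).symm
      exact sub_ne_zero.mpr (by exact_mod_cast hwm)
    have hsupp : ∀ k, s.b.repr y k ≠ 0 → THVAux.wt k = m := by
      intro k hk
      by_contra hkm
      apply hk
      rw [hy]
      rcases eq_or_ne (s.b.repr x k) 0 with h1 | h1
      · rw [h1, mul_zero]
      · exact mul_eq_zero_of_left (Finset.prod_eq_zero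
          (f := fun w : ℤ => ((THVAux.wt k : ℂ) - (w : ℂ)))
          (Finset.mem_erase.mpr
            ⟨hkm, Finset.mem_image_of_mem THVAux.wt (Finsupp.mem_support_iff.mpr h1)⟩)
          (sub_self _)) _
    have hydec : y = a • s.b (HVIx.l m) + bb • s.b (HVIx.i m)
        + (s.b.repr y HVIx.cl • s.b HVIx.cl + s.b.repr y HVIx.ci • s.b HVIx.ci
           + s.b.repr y HVIx.cli • s.b HVIx.cli) := by
      have hln : ∀ n : ℤ, n ≠ m → s.b.repr y (HVIx.l n) = 0 := by
        intro n hn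
        by_contra h
        exact hn (by simpa [THVAux.wt] using hsupp _ h)
      have hin : ∀ n : ℤ, n ≠ m → s.b.repr y (HVIx.i n) = 0 := by
        intro n hn
        by_contra h
        exact hn (by simpa [THVAux.wt] using hsupp _ h)
      apply s.b.repr.injective
      ext k
      simp only [ha, hbb, map_add, map_smul, Module.Basis.repr_self, Finsupp.add_apply,
        Finsupp.smul_apply, Finsupp.single_apply, smul_eq_mul]
      cases k with
      | l n =>
        rcases eq_or_ne n m with rfl | hn
        · simp
        · simp [hn, Ne.symm hn, hln n hn]
      | i n =>
        rcases eq_or_ne n m with rfl | hn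
        · simp
        · simp [hn, Ne.symm hn, hin n hn]
      | cl => simp
      | ci => simp
      | cli => simp
    have h2m1 : 2 * (m : ℂ) - 1 ≠ 0 := by
      have h := Int.cast_ne_zero (α := ℂ).mpr (show (2 * m - 1 : ℤ) ≠ 0 by omega)
      push_cast at h
      exact h
    have h2m1' : 2 * (m : ℂ) + 1 ≠ 0 := by
      have h := Int.cast_ne_zero (α := ℂ).mpr (show (2 * m + 1 : ℤ) ≠ 0 by omega)
      push_cast at h
      exact h
    have hu : ⁅s.b (HVIx.l (1 - m)), y⁆
        = (a * (2 * (m : ℂ) - 1)) • s.b (HVIx.l 1) + (bb * (m : ℂ)) • s.b (HVIx.i 1) := by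
      conv_lhs => rw [hydec]
      simp only [lie_add, lie_smul, s.central_CL, s.central_CI, s.central_CLI, smul_zero,
        add_zero]
      rw [s.bracket_LL, s.bracket_LI, (show 1 - m + m = (1 : ℤ) by ring),
        if_neg (by norm_num : (1 : ℤ) ≠ 0), if_neg (by norm_num : (1 : ℤ) ≠ 0),
        add_zero, add_zero, smul_smul, smul_smul]
      congr 1
      · congr 1
        push_cast
        ring
    have hv : ⁅s.b (HVIx.l (-1 - m)), y⁆
        = (a * (2 * (m : ℂ) + 1)) • s.b (HVIx.l (-1)) + (bb * (m : ℂ)) • s.b (HVIx.i (-1)) := by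
      conv_lhs => rw [hydec]
      simp only [lie_add, lie_smul, s.central_CL, s.central_CI, s.central_CLI, smul_zero,
        add_zero]
      rw [s.bracket_LL, s.bracket_LI, (show -1 - m + m = (-1 : ℤ) by ring),
        if_neg (by norm_num : (-1 : ℤ) ≠ 0), if_neg (by norm_num : (-1 : ℤ) ≠ 0),
        add_zero, add_zero, smul_smul, smul_smul]
      congr 1
      · congr 1
        push_cast
        ring
    have huJ : (a * (2 * (m : ℂ) - 1)) • s.b (HVIx.l 1) + (bb * (m : ℂ)) • s.b (HVIx.i 1) ∈ J := by
      rw [← hu]; exact lie_mem_right ℂ 𝔏 J _ _ hyJ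
    have hvJ : (a * (2 * (m : ℂ) + 1)) • s.b (HVIx.l (-1)) + (bb * (m : ℂ)) • s.b (HVIx.i (-1)) ∈ J := by
      rw [← hv]; exact lie_mem_right ℂ 𝔏 J _ _ hyJ
    have smul_cancel : ∀ (c : ℂ) (v : 𝔏), c ≠ 0 → c • v ∈ J → v ∈ J := by
      intro c v hc hv'
      have h2 := SMulMemClass.smul_mem c⁻¹ hv'
      rwa [smul_smul, inv_mul_cancel₀ hc, one_smul] at h2
    have hI1L1 : ⁅s.b (HVIx.i 1), s.b (HVIx.l 1)⁆ = -s.b (HVIx.i 2) := by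
      rw [← lie_skew, s.bracket_LI]
      norm_num
    have hI1I1 : ⁅s.b (HVIx.i 1), s.b (HVIx.i 1)⁆ = 0 := by
      rw [s.bracket_II]; norm_num
    have hI2 : s.b (HVIx.i 2) ∈ J := by
      have h := lie_mem_right ℂ 𝔏 J (s.b (HVIx.i 1)) _ huJ
      rw [lie_add, lie_smul, lie_smul, hI1L1, hI1I1, smul_zero, add_zero, smul_neg] at h
      exact smul_cancel _ _ (mul_ne_zero ha0 h2m1) (neg_mem_iff.mp h)
    have hIn : ∀ n : ℤ, s.b (HVIx.i n) ∈ J := by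
      have h' : ∀ n : ℤ, n ≠ 0 → s.b (HVIx.i n) ∈ J := by
        intro n hn
        have h := lie_mem_right ℂ 𝔏 J (s.b (HVIx.l (n - 2))) _ hI2
        rw [s.bracket_LI, (show n - 2 + 2 = n by ring), if_neg hn, add_zero] at h
        exact smul_cancel _ _ (by norm_num) h
      intro n
      rcases eq_or_ne n 0 with rfl | hn
      · have h := lie_mem_right ℂ 𝔏 J (s.b (HVIx.l 1)) _ (h' (-1) (by norm_num))
        rw [s.bracket_LI, (show (1 : ℤ) + -1 = 0 by ring), if_pos rfl,
          (show ((1 : ℤ) : ℂ) ^ 2 - ((1 : ℤ) : ℂ) = 0 by norm_num), zero_smul, add_zero] at h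
        exact smul_cancel _ _ (by norm_num) h
      · exact h' n hn
    have hCI : s.b HVIx.ci ∈ J := by
      have h := lie_mem_right ℂ 𝔏 J (s.b (HVIx.i 1)) _ (hIn (-1))
      rw [s.bracket_II, if_pos (by norm_num : (1 : ℤ) + -1 = 0)] at h
      exact smul_cancel _ _ (by norm_num) h
    have hCLI : s.b HVIx.cli ∈ J := by
      have h := lie_mem_right ℂ 𝔏 J (s.b (HVIx.l (-2))) _ hI2
      rw [s.bracket_LI, (show (-2 : ℤ) + 2 = 0 by ring), if_pos rfl] at h
      have h2 := sub_mem h (SMulMemClass.smul_mem ((2 : ℤ) : ℂ) (hIn 0))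
      rw [add_sub_cancel_left] at h2
      exact smul_cancel _ _ (by norm_num) h2
    have hL1 : s.b (HVIx.l 1) ∈ J := by
      have h := sub_mem huJ (SMulMemClass.smul_mem (bb * (m : ℂ)) (hIn 1))
      rw [add_sub_cancel_right] at h
      exact smul_cancel _ _ (mul_ne_zero ha0 h2m1) h
    have hLm1 : s.b (HVIx.l (-1)) ∈ J := by
      have h := sub_mem hvJ (SMulMemClass.smul_mem (bb * (m : ℂ)) (hIn (-1)))
      rw [add_sub_cancel_right] at h
      exact smul_cancel _ _ (mul_ne_zero ha0 h2m1') h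
    have hL0 : s.b (HVIx.l 0) ∈ J := by
      have h := lie_mem_right ℂ 𝔏 J (s.b (HVIx.l 1)) _ hLm1
      rw [s.bracket_LL, (show (1 : ℤ) + -1 = 0 by ring), if_pos rfl,
        (show (((1 : ℤ) : ℂ) ^ 3 - ((1 : ℤ) : ℂ)) / 12 = 0 by norm_num), zero_smul,
        add_zero] at h
      exact smul_cancel _ _ (by norm_num) h
    have hLn : ∀ n : ℤ, s.b (HVIx.l n) ∈ J := by
      intro n
      rcases eq_or_ne n 0 with rfl | hn
      · exact hL0
      · have h := lie_mem_left ℂ 𝔏 J (s.b (HVIx.l 0)) (s.b (HVIx.l n)) hL0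
        rw [s.bracket_LL, zero_add, if_neg hn, add_zero] at h
        refine smul_cancel _ _ ?_ h
        have : ((n : ℤ) : ℂ) ≠ 0 := Int.cast_ne_zero.mpr hn
        simpa using this
    have hCL : s.b HVIx.cl ∈ J := by
      have h := lie_mem_right ℂ 𝔏 J (s.b (HVIx.l 2)) _ (hLn (-2))
      rw [s.bracket_LL, (show (2 : ℤ) + -2 = 0 by ring), if_pos rfl] at h
      have h2 := sub_mem h (SMulMemClass.smul_mem ((((-2 : ℤ) : ℂ)) - ((2 : ℤ) : ℂ)) (hLn 0))
      rw [add_sub_cancel_left] at h2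
      exact smul_cancel _ _ (by norm_num) h2
    rw [← LieSubmodule.toSubmodule_eq_top, eq_top_iff, ← s.b.span_eq, Submodule.span_le]
    rintro _ ⟨k, rfl⟩
    rw [SetLike.mem_coe, LieSubmodule.mem_toSubmodule]
    cases k with
    | l n => exact hLn n
    | i n => exact hIn n
    | cl => exact hCL
    | ci => exact hCI
    | cli => exact hCLI
end

section
/- For any conjugate-linear anti-involution θ of the twisted Heisenberg-Virasoro algebra 𝔏, one has θ(H ⊕ ℂC_{LI}) = H ⊕ ℂC_{LI}, where H = (⊕_{n∈ℤ} ℂI_n) ⊕ ℂC_I is the Heisenberg subalgebra. -/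
deriving instance DecidableEq for HVIx

namespace THVProof

open THV Submodule

variable {𝔏 : Type*} [LieRing 𝔏] [LieAlgebra ℂ 𝔏] (s : THV 𝔏)

lemma Ldef (n : ℤ) : s.L n = s.b (.l n) := rfl
lemma Idef (n : ℤ) : s.I n = s.b (.i n) := rfl
lemma CLdef : s.CL = s.b .cl := rfl
lemma CIdef : s.CI = s.b .ci := rfl
lemma CLIdef : s.CLI = s.b .cli := rfl

/-- The span of the `I n` together with all three central elements. -/
def Q : Submodule ℂ 𝔏 := Submodule.span ℂ (Set.range s.I ∪ {s.CL, s.CI, s.CLI})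
/-- The span of the central elements. -/
def Zc : Submodule ℂ 𝔏 := Submodule.span ℂ {s.CL, s.CI, s.CLI}
/-- The subspace in the theorem. -/
def M : Submodule ℂ 𝔏 := Submodule.span ℂ (Set.range s.I ∪ {s.CI, s.CLI})

lemma I_mem_Q (n : ℤ) : s.I n ∈ Q s := subset_span (Or.inl ⟨n, rfl⟩)
lemma CL_mem_Q : s.CL ∈ Q s := subset_span (Or.inr (by simp))
lemma CI_mem_Q : s.CI ∈ Q s := subset_span (Or.inr (by simp))
lemma CLI_mem_Q : s.CLI ∈ Q s := subset_span (Or.inr (by simp))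
lemma I_mem_M (n : ℤ) : s.I n ∈ M s := subset_span (Or.inl ⟨n, rfl⟩)
lemma CI_mem_M : s.CI ∈ M s := subset_span (Or.inr (by simp))
lemma CLI_mem_M : s.CLI ∈ M s := subset_span (Or.inr (by simp))

lemma Zc_le_Q : Zc s ≤ Q s := span_mono (fun x hx => Or.inr hx)

lemma M_le_Q : M s ≤ Q s := span_mono (by
  rintro x (hx | hx)
  · exact Or.inl hx
  · right
    simp only [Set.mem_insert_iff, Set.mem_singleton_iff] at hx ⊢
    tauto)

lemma lie_Zc (x z : 𝔏) (hz : z ∈ Zc s) : ⁅x, z⁆ = 0 := by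
  induction hz using Submodule.span_induction with
  | mem y hy =>
    simp only [Set.mem_insert_iff, Set.mem_singleton_iff] at hy
    rcases hy with rfl | rfl | rfl
    · exact s.central_CL x
    · exact s.central_CI x
    · exact s.central_CLI x
  | zero => exact lie_zero x
  | add y z hy hz ihy ihz => rw [lie_add, ihy, ihz, add_zero]
  | smul c y hy ih => rw [lie_smul, ih, smul_zero]

lemma Zc_lie (z x : 𝔏) (hz : z ∈ Zc s) : ⁅z, x⁆ = 0 := by
  rw [← lie_skew, lie_Zc s x z hz, neg_zero]

lemma coordL_zero (w : 𝔏) (hw : w ∈ Q s) (m : ℤ) : s.b.repr w (.l m) = 0 := by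
  induction hw using Submodule.span_induction with
  | mem y hy =>
    rcases hy with ⟨n, rfl⟩ | hy
    · simp [Idef, Module.Basis.repr_self, Finsupp.single_apply]
    · simp only [Set.mem_insert_iff, Set.mem_singleton_iff] at hy
      rcases hy with rfl | rfl | rfl <;>
        simp [CLdef, CIdef, CLIdef, Module.Basis.repr_self, Finsupp.single_apply]
  | zero => simp
  | add y z hy hz ihy ihz => simp [ihy, ihz]
  | smul c y hy ih => simp [ih]

lemma coordI_zero_Zc (z : 𝔏) (hz : z ∈ Zc s) (k : ℤ) : s.b.repr z (.i k) = 0 := by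
  induction hz using Submodule.span_induction with
  | mem y hy =>
    simp only [Set.mem_insert_iff, Set.mem_singleton_iff] at hy
    rcases hy with rfl | rfl | rfl <;>
      simp [CLdef, CIdef, CLIdef, Module.Basis.repr_self, Finsupp.single_apply]
  | zero => simp
  | add y z hy hz ihy ihz => simp [ihy, ihz]
  | smul c y hy ih => simp [ih]

lemma lie_QQ (v w : 𝔏) (hv : v ∈ Q s) (hw : w ∈ Q s) : ⁅v, w⁆ ∈ Zc s := by
  induction hv using Submodule.span_induction with
  | mem v hv =>
    induction hw using Submodule.span_induction with
    | mem w hw =>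
      rcases hv with ⟨n, rfl⟩ | hv
      · rcases hw with ⟨k, rfl⟩ | hw
        · rw [Idef, Idef, s.bracket_II]
          split
          · exact smul_mem _ _ (subset_span (Or.inr (Or.inl rfl)))
          · exact zero_mem _
        · rw [lie_Zc s _ _ (subset_span hw)]; exact zero_mem _
      · rw [Zc_lie s _ _ (subset_span hv)]; exact zero_mem _
    | zero => rw [lie_zero]; exact zero_mem _
    | add y z hy hz ihy ihz => rw [lie_add]; exact add_mem ihy ihz
    | smul c y hy ih => rw [lie_smul]; exact smul_mem _ _ ih
  | zero => rw [zero_lie]; exact zero_mem _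
  | add y z hy hz ihy ihz => rw [add_lie]; exact add_mem ihy ihz
  | smul c y hy ih => rw [smul_lie]; exact smul_mem _ _ ih

lemma lie_I_any (n : ℤ) (y : 𝔏) : ⁅s.I n, y⁆ ∈ M s := by
  have hy : y ∈ Submodule.span ℂ (Set.range s.b) := by rw [Module.Basis.span_eq]; trivial
  induction hy using Submodule.span_induction with
  | mem y hy =>
    obtain ⟨j, rfl⟩ := hy
    cases j with
    | l m =>
      rw [← lie_skew, Idef, s.bracket_LI m n]
      refine neg_mem (add_mem (smul_mem _ _ (I_mem_M s _)) ?_)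
      split
      · exact smul_mem _ _ (CLI_mem_M s)
      · exact zero_mem _
    | i k =>
      rw [Idef, s.bracket_II]
      split
      · exact smul_mem _ _ (CI_mem_M s)
      · exact zero_mem _
    | cl => rw [s.central_CL]; exact zero_mem _
    | ci => rw [s.central_CI]; exact zero_mem _
    | cli => rw [s.central_CLI]; exact zero_mem _
  | zero => rw [lie_zero]; exact zero_mem _
  | add y z hy hz ihy ihz => rw [lie_add]; exact add_mem ihy ihz
  | smul c y hy ih => rw [lie_smul]; exact smul_mem _ _ ih

lemma lie_Q_any (v : 𝔏) (hv : v ∈ Q s) (y : 𝔏) : ⁅v, y⁆ ∈ M s := by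
  induction hv using Submodule.span_induction with
  | mem v hv =>
    rcases hv with ⟨n, rfl⟩ | hv
    · exact lie_I_any s n y
    · rw [Zc_lie s _ _ (subset_span hv)]; exact zero_mem _
  | zero => rw [zero_lie]; exact zero_mem _
  | add a b ha hb iha ihb => rw [add_lie]; exact add_mem iha ihb
  | smul c a ha ih => rw [smul_lie]; exact smul_mem _ _ ih

lemma lie_L_Q (m : ℤ) (w : 𝔏) (hw : w ∈ Q s) : ⁅s.L m, w⁆ ∈ Q s := by
  induction hw using Submodule.span_induction with
  | mem w hw =>
    rcases hw with ⟨k, rfl⟩ | hw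
    · rw [Ldef, Idef, s.bracket_LI]
      refine add_mem (smul_mem _ _ (I_mem_Q s _)) ?_
      split
      · exact smul_mem _ _ (CLI_mem_Q s)
      · exact zero_mem _
    · rw [lie_Zc s _ _ (subset_span hw)]; exact zero_mem _
  | zero => rw [lie_zero]; exact zero_mem _
  | add y z hy hz ihy ihz => rw [lie_add]; exact add_mem ihy ihz
  | smul c y hy ih => rw [lie_smul]; exact smul_mem _ _ ih

lemma lie_L_coordI (m j : ℤ) (w : 𝔏) (hw : w ∈ Q s) :
    s.b.repr ⁅s.L m, w⁆ (.i j) = ((j - m : ℤ) : ℂ) * s.b.repr w (.i (j - m)) := by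
  induction hw using Submodule.span_induction with
  | mem w hw =>
    rcases hw with ⟨k, rfl⟩ | hw
    · rw [Ldef, Idef, s.bracket_LI]
      have hz : s.b.repr (if m + k = 0 then ((m : ℂ) ^ 2 - (m : ℂ)) • s.b .cli else 0)
          (HVIx.i j) = 0 := by
        split <;> simp [Module.Basis.repr_self, Finsupp.single_apply]
      rw [map_add, Finsupp.add_apply, hz, add_zero, map_smul, Finsupp.smul_apply,
        Module.Basis.repr_self, Module.Basis.repr_self]
      by_cases h : k = j - m
      · subst h
        have e : m + (j - m) = j := by ring
        rw [e]
        simp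
      · rw [Finsupp.single_apply, Finsupp.single_apply, if_neg (by simp; omega),
          if_neg (by simp [h])]
        simp
    · have h1 : ⁅s.L m, w⁆ = 0 := lie_Zc s _ _ (subset_span hw)
      have h2 : s.b.repr w (.i (j - m)) = 0 := coordI_zero_Zc s w (subset_span hw) _
      rw [h1, h2, map_zero]; simp
  | zero => simp
  | add y z hy hz ihy ihz =>
    rw [lie_add, map_add, Finsupp.add_apply, ihy, ihz, map_add, Finsupp.add_apply]
    ring
  | smul c y hy ih =>
    rw [lie_smul, map_smul, Finsupp.smul_apply, ih, map_smul, Finsupp.smul_apply]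
    simp [smul_eq_mul]
    ring

lemma mem_Q_of_coordL (x : 𝔏) (hx : ∀ m : ℤ, s.b.repr x (.l m) = 0) : x ∈ Q s := by
  have hrep := s.b.linearCombination_repr x
  rw [← hrep, Finsupp.linearCombination_apply]
  refine Submodule.finsuppSum_mem ℂ (Q s) (s.b.repr x) _ (fun i hi => ?_)
  cases i with
  | l m => exact absurd (hx m) hi
  | i n => exact smul_mem _ _ (I_mem_Q s n)
  | cl => exact smul_mem _ _ (CL_mem_Q s)
  | ci => exact smul_mem _ _ (CI_mem_Q s)
  | cli => exact smul_mem _ _ (CLI_mem_Q s)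

end THVProof

namespace THVProof

open THV Submodule

variable {𝔏 : Type*} [LieRing 𝔏] [LieAlgebra ℂ 𝔏] (s : THV 𝔏)

/-- Bracketing on the right, as a linear map. -/
def adr (w : 𝔏) : 𝔏 →ₗ[ℂ] 𝔏 where
  toFun v := ⁅v, w⁆
  map_add' a b := add_lie a b w
  map_smul' c a := smul_lie c a w

@[simp] lemma adr_apply (w v : 𝔏) : adr w v = ⁅v, w⁆ := rfl

lemma step (u w : 𝔏) (m₀ t : ℤ)
    (hu : ∀ m : ℤ, m₀ < m → s.b.repr u (.l m) = 0)
    (hw : w ∈ Q s) (hwt : ∀ k : ℤ, t < k → s.b.repr w (.i k) = 0) :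
    ⁅u, w⁆ ∈ Q s ∧ (∀ k : ℤ, t + m₀ < k → s.b.repr ⁅u, w⁆ (.i k) = 0) ∧
      s.b.repr ⁅u, w⁆ (.i (t + m₀)) = s.b.repr u (.l m₀) * (t : ℂ) * s.b.repr w (.i t) := by
  classical
  set F : ℤ →₀ ℂ := Finsupp.comapDomain HVIx.l (s.b.repr u)
    (fun a _ c _ h => by injection h) with hFdef
  have hF : ∀ m : ℤ, F m = s.b.repr u (.l m) := fun m => rfl
  set uL : 𝔏 := F.sum fun m c => c • s.L m with huL
  have hcoordL : ∀ m' : ℤ, s.b.repr uL (.l m') = F m' := by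
    intro m'
    rw [huL, map_finsuppSum, Finsupp.sum_apply]
    have : ∀ m c, (s.b.repr (c • s.L m)) (HVIx.l m') = if m = m' then c else 0 := by
      intro m c
      rw [map_smul, Finsupp.smul_apply, Ldef, Module.Basis.repr_self, Finsupp.single_apply]
      simp only [HVIx.l.injEq, smul_eq_mul, mul_ite, mul_one, mul_zero]
    rw [Finsupp.sum_congr (g2 := fun m c => if m = m' then c else 0) (fun m _ => this m (F m))]
    exact Finsupp.sum_ite_self_eq' F m'
  have hu'Q : u - uL ∈ Q s := by
    refine mem_Q_of_coordL s _ (fun m => ?_)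
    rw [map_sub, Finsupp.sub_apply, hcoordL m, hF m, sub_self]
  have hsplit : ⁅u, w⁆ = ⁅uL, w⁆ + ⁅u - uL, w⁆ := by
    rw [← add_lie, add_sub_cancel]
  have huLQ : ⁅uL, w⁆ ∈ Q s := by
    rw [huL]
    have : ⁅F.sum fun m c => c • s.L m, w⁆ = F.sum fun m c => c • ⁅s.L m, w⁆ := by
      rw [show (⁅F.sum fun m c => c • s.L m, w⁆ : 𝔏) = adr w (F.sum fun m c => c • s.L m) from rfl,
        map_finsuppSum]
      simp
    rw [this]
    exact Submodule.finsuppSum_mem ℂ (Q s) F _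
      (fun m _ => smul_mem _ _ (lie_L_Q s m w hw))
  have hmem : ⁅u, w⁆ ∈ Q s := by
    rw [hsplit]
    exact add_mem huLQ (Zc_le_Q s (lie_QQ s _ _ hu'Q hw))
  have hcoord : ∀ k : ℤ, s.b.repr ⁅u, w⁆ (.i k) =
      F.sum fun m c => c * (((k - m : ℤ) : ℂ) * s.b.repr w (.i (k - m))) := by
    intro k
    rw [hsplit, map_add, Finsupp.add_apply,
      coordI_zero_Zc s _ (lie_QQ s _ _ hu'Q hw) k, add_zero, huL]
    have h3 : (⁅F.sum fun m c => c • s.L m, w⁆ : 𝔏) = F.sum fun m c => c • ⁅s.L m, w⁆ := by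
      rw [show (⁅F.sum fun m c => c • s.L m, w⁆ : 𝔏) = adr w (F.sum fun m c => c • s.L m) from rfl,
        map_finsuppSum]
      simp
    rw [h3, map_finsuppSum, Finsupp.sum_apply]
    refine Finsupp.sum_congr (fun m _ => ?_)
    rw [map_smul, Finsupp.smul_apply, lie_L_coordI s m k w hw]
    simp [smul_eq_mul]
  refine ⟨hmem, fun k hk => ?_, ?_⟩
  · rw [hcoord k]
    rw [Finsupp.sum]
    refine Finset.sum_eq_zero (fun m hm => ?_)
    have hm' : m ≤ m₀ := by
      by_contra hc
      exact (Finsupp.mem_support_iff.mp hm) (by rw [hF]; exact hu m (by omega))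
    rw [hwt (k - m) (by omega), mul_zero, mul_zero]
  · rw [hcoord (t + m₀), Finsupp.sum]
    rw [Finset.sum_eq_single m₀
      (fun m hm hne => ?_) (fun hnm => ?_)]
    · rw [← hF m₀]
      have : t + m₀ - m₀ = t := by ring
      rw [this]
      ring
    · have hm' : m ≤ m₀ := by
        by_contra hc
        exact (Finsupp.mem_support_iff.mp hm) (by rw [hF]; exact hu m (by omega))
      rw [hwt (t + m₀ - m) (by omega), mul_zero, mul_zero]
    · rw [Finsupp.notMem_support_iff.mp hnm, zero_mul]

end THVProof

namespace THVProof

open THV Submodule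

variable {𝔏 : Type*} [LieRing 𝔏] [LieAlgebra ℂ 𝔏] (s : THV 𝔏)

lemma P_imp_coordL (u : 𝔏) (hP : ∀ y : 𝔏, ⁅u, ⁅u, ⁅u, y⁆⁆⁆ = 0) :
    ∀ m : ℤ, s.b.repr u (.l m) = 0 := by
  classical
  by_contra h
  push_neg at h
  obtain ⟨m₁, hm₁⟩ := h
  set F : ℤ →₀ ℂ := Finsupp.comapDomain HVIx.l (s.b.repr u)
    (fun a _ c _ h => by injection h) with hFdef
  have hF : ∀ m : ℤ, F m = s.b.repr u (.l m) := fun m => rfl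
  have hne : F.support.Nonempty := ⟨m₁, Finsupp.mem_support_iff.mpr (by rw [hF]; exact hm₁)⟩
  set m₀ : ℤ := F.support.max' hne with hm₀def
  have ha : s.b.repr u (.l m₀) ≠ 0 := by
    rw [← hF]
    exact Finsupp.mem_support_iff.mp (F.support.max'_mem hne)
  have hu : ∀ m : ℤ, m₀ < m → s.b.repr u (.l m) = 0 := by
    intro m hm
    by_contra hc
    have : m ∈ F.support := Finsupp.mem_support_iff.mpr (by rw [hF]; exact hc)
    exact absurd (F.support.le_max' m this) (by omega)
  have habs1 : m₀ ≤ |m₀| := le_abs_self m₀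
  have habs2 : -m₀ ≤ |m₀| := neg_le_abs m₀
  set N : ℤ := 2 * |m₀| + 1 with hNdef
  have hN0 : N ≠ 0 := by omega
  have hN1 : N + m₀ ≠ 0 := by omega
  have hN2 : N + m₀ + m₀ ≠ 0 := by omega
  have hw0Q : s.I N ∈ Q s := I_mem_Q s N
  have hw0t : ∀ k : ℤ, N < k → s.b.repr (s.I N) (.i k) = 0 := by
    intro k hk
    rw [Idef, Module.Basis.repr_self, Finsupp.single_apply, if_neg (by simp; omega)]
  have hw0v : s.b.repr (s.I N) (.i N) = 1 := by
    rw [Idef, Module.Basis.repr_self, Finsupp.single_apply, if_pos rfl]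
  obtain ⟨h1Q, h1t, h1v⟩ := step s u (s.I N) m₀ N hu hw0Q hw0t
  obtain ⟨h2Q, h2t, h2v⟩ := step s u _ m₀ (N + m₀) hu h1Q h1t
  obtain ⟨h3Q, h3t, h3v⟩ := step s u _ m₀ (N + m₀ + m₀) hu h2Q h2t
  rw [hP (s.I N)] at h3v
  rw [h2v, h1v, hw0v] at h3v
  simp only [map_zero, Finsupp.coe_zero, Pi.zero_apply] at h3v
  have c0 : ((N : ℂ)) ≠ 0 := Int.cast_ne_zero.mpr hN0
  have c1 : ((N + m₀ : ℤ) : ℂ) ≠ 0 := Int.cast_ne_zero.mpr hN1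
  have c2 : ((N + m₀ + m₀ : ℤ) : ℂ) ≠ 0 := Int.cast_ne_zero.mpr hN2
  have := mul_ne_zero (mul_ne_zero ha c2)
    (mul_ne_zero (mul_ne_zero (mul_ne_zero ha c1)
      (mul_ne_zero (mul_ne_zero ha c0) one_ne_zero)) one_ne_zero)
  rw [mul_one] at this
  exact this h3v.symm

lemma P_imp_Q (u : 𝔏) (hP : ∀ y : 𝔏, ⁅u, ⁅u, ⁅u, y⁆⁆⁆ = 0) : u ∈ Q s :=
  mem_Q_of_coordL s u (P_imp_coordL s u hP)

lemma M_P (x : 𝔏) (hx : x ∈ M s) : ∀ y : 𝔏, ⁅x, ⁅x, ⁅x, y⁆⁆⁆ = 0 := by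
  intro y
  have h1 : ⁅x, y⁆ ∈ M s := lie_Q_any s x (M_le_Q s hx) y
  have h2 : ⁅x, ⁅x, y⁆⁆ ∈ Zc s := lie_QQ s x _ (M_le_Q s hx) (M_le_Q s h1)
  exact lie_Zc s x _ h2

section Theta

variable {θ : 𝔏 → 𝔏} (hθ : IsConjAntiInvol 𝔏 θ)

include hθ

lemma theta_zero : θ 0 = 0 := by
  have h := hθ.map_add 0 0
  rw [add_zero] at h
  have := h.symm
  rwa [add_eq_left] at this

lemma theta_neg (x : 𝔏) : θ (-x) = -θ x := by
  have h := hθ.map_smul (-1) x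
  simpa using h

lemma theta_bracket' (x w : 𝔏) : ⁅θ x, θ w⁆ = -θ ⁅x, w⁆ := by
  rw [hθ.map_bracket]
  exact (lie_skew _ _).symm

lemma P_theta (x : 𝔏) (h : ∀ y : 𝔏, ⁅x, ⁅x, ⁅x, y⁆⁆⁆ = 0) :
    ∀ y : 𝔏, ⁅θ x, ⁅θ x, ⁅θ x, y⁆⁆⁆ = 0 := by
  have key : ∀ z : 𝔏, ⁅θ x, ⁅θ x, ⁅θ x, θ z⁆⁆⁆ = -θ ⁅x, ⁅x, ⁅x, z⁆⁆⁆ := by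
    intro z
    rw [theta_bracket' hθ x z, lie_neg, theta_bracket' hθ x ⁅x, z⁆, neg_neg,
      theta_bracket' hθ x ⁅x, ⁅x, z⁆⁆]
  intro y
  conv_lhs => rw [← hθ.invol y]
  rw [key (θ y), h (θ y), theta_zero hθ, neg_zero]

lemma theta_mem_M (x : 𝔏) (hx : x ∈ M s) : θ x ∈ M s := by
  induction hx using Submodule.span_induction with
  | mem g hg =>
    have hQ : ∀ n : ℤ, θ (s.I n) ∈ Q s := fun n =>
      P_imp_Q s _ (P_theta hθ _ (M_P s _ (I_mem_M s n)))
    have hI : ∀ n : ℤ, θ (s.I n) ∈ M s := by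
      intro n
      by_cases hn : n = 0
      · subst hn
        have e : s.I 0 = -⁅s.L 1, s.I (-1)⁆ := by
          simp only [Ldef, Idef]
          rw [s.bracket_LI 1 (-1)]
          norm_num
        rw [e, theta_neg hθ, hθ.map_bracket]
        exact neg_mem (lie_Q_any s _ (hQ (-1)) _)
      · have e : s.I n = ⁅s.L (n - 1), s.I 1⁆ := by
          simp only [Ldef, Idef]
          rw [s.bracket_LI (n - 1) 1, if_neg (by omega)]
          have hnn : n - 1 + 1 = n := by ring
          rw [hnn]
          norm_num
        rw [e, hθ.map_bracket]
        exact lie_Q_any s _ (hQ 1) _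
    rcases hg with ⟨n, rfl⟩ | hg
    · exact hI n
    · simp only [Set.mem_insert_iff, Set.mem_singleton_iff] at hg
      rcases hg with rfl | rfl
      · have e : s.CI = ⁅s.I (-1), s.I 1⁆ := by
          simp only [Idef, CIdef]
          rw [s.bracket_II (-1) 1, if_pos (by norm_num)]
          norm_num
        rw [e, hθ.map_bracket]
        exact lie_Q_any s _ (hQ 1) _
      · have e : s.CLI = s.I 0 + (1 / 2 : ℂ) • ⁅s.L 2, s.I (-2)⁆ := by
          simp only [Ldef, Idef, CLIdef]
          rw [s.bracket_LI 2 (-2)]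
          have h22 : (2 : ℤ) + -2 = 0 := by norm_num
          rw [h22, if_pos rfl]
          push_cast
          norm_num
          module
        rw [e, hθ.map_add, hθ.map_smul]
        refine add_mem (hI 0) (smul_mem _ _ ?_)
        rw [hθ.map_bracket]
        exact lie_Q_any s _ (hQ (-2)) _
  | zero => rw [theta_zero hθ]; exact zero_mem _
  | add x y hx hy ihx ihy => rw [hθ.map_add]; exact add_mem ihx ihy
  | smul c x hx ih => rw [hθ.map_smul]; exact smul_mem _ _ ih

end Theta

end THVProof


/-- For any conjugate-linear anti-involution `θ` of `𝔏` one has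
`θ(H ⊕ ℂC_LI) = H ⊕ ℂC_LI`, where `H = (⊕ₙ ℂI_n) ⊕ ℂC_I`. -/
theorem theta_preserves_H_CLI (𝔏 : Type*) [LieRing 𝔏] [LieAlgebra ℂ 𝔏] (s : THV 𝔏)
    (θ : 𝔏 → 𝔏) (hθ : IsConjAntiInvol 𝔏 θ) :
    θ '' (Submodule.span ℂ (Set.range s.I ∪ {s.CI, s.CLI}) : Set 𝔏) =
      (Submodule.span ℂ (Set.range s.I ∪ {s.CI, s.CLI}) : Set 𝔏) := by
  have key : ∀ x ∈ THVProof.M s, θ x ∈ THVProof.M s :=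
    fun x hx => THVProof.theta_mem_M s hθ x hx
  have hMs : (Submodule.span ℂ (Set.range s.I ∪ {s.CI, s.CLI}) : Submodule ℂ 𝔏) =
      THVProof.M s := rfl
  rw [hMs]
  ext y
  simp only [Set.mem_image, SetLike.mem_coe]
  constructor
  · rintro ⟨x, hx, rfl⟩
    exact key x hx
  · intro hy
    exact ⟨θ y, key y hy, hθ.invol y⟩
end

section
/- For every nonzero real number α and every real number γ, the map θ⁺_{α,γ} defined on basis elements by θ⁺_{α,γ}(L_n) = αⁿL_{−n}, θ⁺_{α,γ}(C_L) = C_L, θ⁺_{α,γ}(I_m) = α^m e^{iγ} I_{−m} for m ≠ 0, θ⁺_{α,γ}(I_0) = e^{iγ}I_0 + 2e^{iγ}C_{LI}, θ⁺_{α,γ}(C_I) = e^{2iγ}C_I, θ⁺_{α,γ}(C_{LI}) = −e^{iγ}C_{LI}, extended conjugate-linearly, is a conjugate-linear anti-involution of the twisted Heisenberg-Virasoro algebra 𝔏. -/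
namespace THV

variable {𝔏 : Type*} [LieRing 𝔏] [LieAlgebra ℂ 𝔏]

/-- Images of the basis vectors under `θ⁺_{α,γ}`. -/
noncomputable def thetaPlusB (s : THV 𝔏) (α γ : ℝ) : HVIx → 𝔏
  | .l n => ((α : ℂ) ^ n) • s.L (-n)
  | .i n => if n = 0 then
      Complex.exp (Complex.I * (γ : ℂ)) • s.I 0 +
        (2 * Complex.exp (Complex.I * (γ : ℂ))) • s.CLI
    else ((α : ℂ) ^ n * Complex.exp (Complex.I * (γ : ℂ))) • s.I (-n)
  | .cl => s.CL
  | .ci => Complex.exp (2 * Complex.I * (γ : ℂ)) • s.CI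
  | .cli => -(Complex.exp (Complex.I * (γ : ℂ)) • s.CLI)

/-- The map `θ⁺_{α,γ}`, defined on the basis elements by
`θ⁺(L n) = αⁿ L₋ₙ`, `θ⁺(C_L) = C_L`, `θ⁺(I m) = αᵐ e^{iγ} I₋ₘ (m ≠ 0)`,
`θ⁺(I 0) = e^{iγ} I 0 + 2 e^{iγ} C_LI`, `θ⁺(C_I) = e^{2iγ} C_I`,
`θ⁺(C_LI) = -e^{iγ} C_LI`, and extended conjugate-linearly. -/
noncomputable def thetaPlus (s : THV 𝔏) (α γ : ℝ) : 𝔏 → 𝔏 :=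
  fun x => (s.b.repr x).sum fun ix c => (starRingEnd ℂ) c • s.thetaPlusB α γ ix

end THV

namespace THV

variable {𝔏 : Type*} [LieRing 𝔏] [LieAlgebra ℂ 𝔏] (s : THV 𝔏) (α γ : ℝ)

/-- `θ⁺` as a bundled conjugate-linear map. -/
lemma thetaPlus_add (x y : 𝔏) :
    s.thetaPlus α γ (x + y) = s.thetaPlus α γ x + s.thetaPlus α γ y := by
  unfold thetaPlus
  rw [map_add, Finsupp.sum_add_index'] <;> intros <;> simp [add_smul]

lemma thetaPlus_smul (c : ℂ) (x : 𝔏) :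
    s.thetaPlus α γ (c • x) = (starRingEnd ℂ) c • s.thetaPlus α γ x := by
  unfold thetaPlus
  rw [map_smul, Finsupp.sum_smul_index' (by intro i; simp), Finsupp.smul_sum]
  exact Finsupp.sum_congr fun i _ => by simp [smul_smul]

noncomputable def thetaSL : 𝔏 →ₛₗ[starRingEnd ℂ] 𝔏 where
  toFun := s.thetaPlus α γ
  map_add' := s.thetaPlus_add α γ
  map_smul' := s.thetaPlus_smul α γ

lemma thetaSL_apply (x : 𝔏) : s.thetaSL α γ x = s.thetaPlus α γ x := rfl

lemma thetaSL_basis (ix : HVIx) : s.thetaSL α γ (s.b ix) = s.thetaPlusB α γ ix := by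
  show (s.b.repr (s.b ix)).sum (fun i c => (starRingEnd ℂ) c • s.thetaPlusB α γ i)
      = s.thetaPlusB α γ ix
  rw [Module.Basis.repr_self, Finsupp.sum_single_index] <;> simp

lemma theta_L (n : ℤ) : s.thetaSL α γ (s.L n) = ((α : ℂ) ^ n) • s.L (-n) :=
  s.thetaSL_basis α γ (.l n)

lemma theta_I {n : ℤ} (hn : n ≠ 0) :
    s.thetaSL α γ (s.I n)
      = ((α : ℂ) ^ n * Complex.exp (Complex.I * (γ : ℂ))) • s.I (-n) := by
  rw [show s.I n = s.b (.i n) from rfl, thetaSL_basis, thetaPlusB, if_neg hn]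

lemma theta_I0 :
    s.thetaSL α γ (s.I 0) = Complex.exp (Complex.I * (γ : ℂ)) • s.I 0 +
      (2 * Complex.exp (Complex.I * (γ : ℂ))) • s.CLI := by
  rw [show s.I 0 = s.b (.i 0) from rfl, thetaSL_basis, thetaPlusB, if_pos rfl]
  rfl

lemma theta_CL : s.thetaSL α γ s.CL = s.CL := s.thetaSL_basis α γ .cl

lemma theta_CI : s.thetaSL α γ s.CI = Complex.exp (2 * Complex.I * (γ : ℂ)) • s.CI :=
  s.thetaSL_basis α γ .ci

lemma theta_CLI :
    s.thetaSL α γ s.CLI = -(Complex.exp (Complex.I * (γ : ℂ)) • s.CLI) :=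
  s.thetaSL_basis α γ .cli

lemma CL_lie (x : 𝔏) : ⁅s.CL, x⁆ = 0 := by
  rw [← lie_skew, show s.CL = s.b .cl from rfl, s.central_CL, neg_zero]

lemma CI_lie (x : 𝔏) : ⁅s.CI, x⁆ = 0 := by
  rw [← lie_skew, show s.CI = s.b .ci from rfl, s.central_CI, neg_zero]

lemma CLI_lie (x : 𝔏) : ⁅s.CLI, x⁆ = 0 := by
  rw [← lie_skew, show s.CLI = s.b .cli from rfl, s.central_CLI, neg_zero]

lemma lLL (m n : ℤ) : ⁅s.L m, s.L n⁆ =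
    ((n : ℂ) - (m : ℂ)) • s.L (m + n) +
      (if m + n = 0 then (((m : ℂ) ^ 3 - (m : ℂ)) / 12) • s.CL else 0) :=
  s.bracket_LL m n

lemma lII (m n : ℤ) : ⁅s.I m, s.I n⁆ =
    (if m + n = 0 then (n : ℂ) • s.CI else 0) :=
  s.bracket_II m n

lemma lLI (m n : ℤ) : ⁅s.L m, s.I n⁆ =
    (n : ℂ) • s.I (m + n) +
      (if m + n = 0 then ((m : ℂ) ^ 2 - (m : ℂ)) • s.CLI else 0) :=
  s.bracket_LI m n

end THV
namespace THV

variable {𝔏 : Type*} [LieRing 𝔏] [LieAlgebra ℂ 𝔏] (s : THV 𝔏) (α γ : ℝ)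

lemma conjE : (starRingEnd ℂ) (Complex.exp (Complex.I * (γ : ℂ)))
    = (Complex.exp (Complex.I * (γ : ℂ)))⁻¹ := by
  rw [← Complex.exp_conj, ← Complex.exp_neg]
  congr 1
  simp

lemma exp2 : Complex.exp (2 * Complex.I * (γ : ℂ))
    = Complex.exp (Complex.I * (γ : ℂ)) * Complex.exp (Complex.I * (γ : ℂ)) := by
  rw [← Complex.exp_add]
  ring_nf

lemma lie_CL (x : 𝔏) : ⁅x, s.CL⁆ = 0 := s.central_CL x
lemma lie_CI (x : 𝔏) : ⁅x, s.CI⁆ = 0 := s.central_CI x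
lemma lie_CLI (x : 𝔏) : ⁅x, s.CLI⁆ = 0 := s.central_CLI x

lemma lIL (m n : ℤ) : ⁅s.I m, s.L n⁆ =
    -((m : ℂ) • s.I (n + m) +
      (if n + m = 0 then ((n : ℂ) ^ 2 - (n : ℂ)) • s.CLI else 0)) := by
  rw [← lie_skew, lLI]

lemma keyLL (hα : α ≠ 0) (m n : ℤ) :
    s.thetaSL α γ ⁅s.L m, s.L n⁆ = ⁅s.thetaSL α γ (s.L n), s.thetaSL α γ (s.L m)⁆ := by
  have hα' : (α : ℂ) ≠ 0 := Complex.ofReal_ne_zero.2 hα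
  rw [theta_L, theta_L, smul_lie, lie_smul, smul_smul, lLL, lLL]
  rcases eq_or_ne (m + n) 0 with h | h
  · obtain rfl : n = -m := by omega
    rw [show ((α:ℂ) ^ (-m) * (α:ℂ) ^ m) = 1 by
      rw [← zpow_add₀ hα', neg_add_cancel, zpow_zero], one_smul]
    simp only [neg_neg, add_neg_cancel, neg_add_cancel, neg_zero, if_pos rfl, if_true, map_add,
      map_smulₛₗ, theta_L, theta_CL, map_sub, map_div₀, map_pow, map_intCast, map_ofNat,
      Complex.conj_ofReal, map_zpow₀, zpow_zero, smul_add, smul_smul, one_mul, one_smul]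
    all_goals match_scalars <;> (push_cast; ring)
  · rw [if_neg h, if_neg (show -n + -m ≠ 0 by omega), show -n + -m = -(m + n) by ring]
    simp only [map_add, map_zero, map_smulₛₗ, theta_L, map_sub, map_intCast, map_zpow₀,
      Complex.conj_ofReal, smul_add, smul_smul, add_zero, smul_zero, zpow_add₀ hα']
    all_goals match_scalars <;> (push_cast; ring)

end THV
namespace THV

variable {𝔏 : Type*} [LieRing 𝔏] [LieAlgebra ℂ 𝔏] (s : THV 𝔏) (α γ : ℝ)

lemma keyLI (hα : α ≠ 0) (m n : ℤ) :
    s.thetaSL α γ ⁅s.L m, s.I n⁆ = ⁅s.thetaSL α γ (s.I n), s.thetaSL α γ (s.L m)⁆ := by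
  have hα' : (α : ℂ) ≠ 0 := Complex.ofReal_ne_zero.2 hα
  have hE : Complex.exp (Complex.I * (γ : ℂ)) ≠ 0 := Complex.exp_ne_zero _
  rcases eq_or_ne n 0 with rfl | hn
  · rcases eq_or_ne m 0 with rfl | hm
    · rw [lLI]
      simp [theta_I0, theta_L, lIL, CLI_lie, add_lie, smul_lie, lie_smul]
    · rw [lLI, if_neg (by omega), theta_I0, theta_L]
      simp [lIL, CLI_lie, add_lie, smul_lie, lie_smul, hm]
  · rcases eq_or_ne (m + n) 0 with h | h
    · obtain rfl : n = -m := by omega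
      have hm : m ≠ 0 := by omega
      have h1 : (α : ℂ) ^ m ≠ 0 := zpow_ne_zero _ hα'
      rw [lLI, theta_I s α γ hn, theta_L, smul_lie, lie_smul, smul_smul, lIL]
      simp only [neg_neg, add_neg_cancel, neg_add_cancel, neg_zero, if_pos rfl, if_true,
        map_add, map_smulₛₗ, theta_I0, theta_CLI, conjE, map_sub, map_pow, map_intCast,
        map_mul, map_zpow₀, Complex.conj_ofReal, smul_add, smul_smul, smul_neg, lie_neg,
        neg_neg, zpow_neg, neg_smul, neg_add_rev]
      match_scalars <;> (push_cast; field_simp <;> ring)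
    · rw [lLI, if_neg h, theta_I s α γ hn, theta_L, smul_lie, lie_smul, smul_smul, lIL,
        if_neg (show -m + -n ≠ 0 by omega), show -m + -n = -(m + n) by ring]
      simp only [map_add, map_zero, add_zero, map_smulₛₗ, theta_I s α γ h, conjE,
        map_intCast, map_zpow₀, map_mul, Complex.conj_ofReal, smul_add, smul_smul,
        smul_zero, smul_neg, neg_smul, zpow_add₀ hα', lie_neg, neg_neg, neg_add_rev]
      all_goals match_scalars <;> (push_cast; ring)

lemma keyII (hα : α ≠ 0) (m n : ℤ) :
    s.thetaSL α γ ⁅s.I m, s.I n⁆ = ⁅s.thetaSL α γ (s.I n), s.thetaSL α γ (s.I m)⁆ := by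
  have hα' : (α : ℂ) ≠ 0 := Complex.ofReal_ne_zero.2 hα
  have hE : Complex.exp (Complex.I * (γ : ℂ)) ≠ 0 := Complex.exp_ne_zero _
  rcases eq_or_ne m 0 with rfl | hm
  · rcases eq_or_ne n 0 with rfl | hn
    · rw [lII]
      simp
    · rw [lII, if_neg (by omega), theta_I s α γ hn, theta_I0]
      simp [lie_add, lie_smul, smul_lie, lie_CLI, lII, hn]
  · rcases eq_or_ne n 0 with rfl | hn
    · rw [lII, if_neg (by omega), theta_I s α γ hm, theta_I0]
      simp [add_lie, lie_smul, smul_lie, CLI_lie, lII, hm]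
    · rcases eq_or_ne (m + n) 0 with h | h
      · obtain rfl : n = -m := by omega
        have h1 : (α : ℂ) ^ m ≠ 0 := zpow_ne_zero _ hα'
        rw [lII, theta_I s α γ hn, theta_I s α γ hm, smul_lie, lie_smul, smul_smul, lII]
        simp only [neg_neg, add_neg_cancel, if_pos rfl, if_true, map_smulₛₗ, theta_CI,
          exp2, map_intCast, smul_smul, zpow_neg]
        match_scalars <;> (push_cast; field_simp <;> ring)
      · rw [lII, if_neg h, map_zero, theta_I s α γ hn, theta_I s α γ hm, smul_lie,
          lie_smul, smul_smul, lII, if_neg (show -n + -m ≠ 0 by omega), smul_zero]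

end THV
namespace THV

variable {𝔏 : Type*} [LieRing 𝔏] [LieAlgebra ℂ 𝔏] (s : THV 𝔏) (α γ : ℝ)

/-- `x ↦ θ ⁅x, y⁆` as a conjugate-linear map. -/
noncomputable def brA (y : 𝔏) : 𝔏 →ₛₗ[starRingEnd ℂ] 𝔏 where
  toFun x := s.thetaSL α γ ⁅x, y⁆
  map_add' x₁ x₂ := by rw [add_lie, map_add]
  map_smul' c x := by rw [smul_lie, map_smulₛₗ]

/-- `x ↦ ⁅θ y, θ x⁆` as a conjugate-linear map. -/
noncomputable def brB (y : 𝔏) : 𝔏 →ₛₗ[starRingEnd ℂ] 𝔏 where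
  toFun x := ⁅s.thetaSL α γ y, s.thetaSL α γ x⁆
  map_add' x₁ x₂ := by rw [map_add, lie_add]
  map_smul' c x := by rw [map_smulₛₗ, lie_smul]

/-- `y ↦ θ ⁅x, y⁆` as a conjugate-linear map. -/
noncomputable def brC (x : 𝔏) : 𝔏 →ₛₗ[starRingEnd ℂ] 𝔏 where
  toFun y := s.thetaSL α γ ⁅x, y⁆
  map_add' y₁ y₂ := by rw [lie_add, map_add]
  map_smul' c y := by rw [lie_smul, map_smulₛₗ]

/-- `y ↦ ⁅θ y, θ x⁆` as a conjugate-linear map. -/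
noncomputable def brD (x : 𝔏) : 𝔏 →ₛₗ[starRingEnd ℂ] 𝔏 where
  toFun y := ⁅s.thetaSL α γ y, s.thetaSL α γ x⁆
  map_add' y₁ y₂ := by rw [map_add, add_lie]
  map_smul' c y := by rw [map_smulₛₗ, smul_lie]

lemma key_swap {θ : 𝔏 →ₛₗ[starRingEnd ℂ] 𝔏} {x y : 𝔏} (h : θ ⁅x, y⁆ = ⁅θ y, θ x⁆) :
    θ ⁅y, x⁆ = ⁅θ x, θ y⁆ := by
  rw [← lie_skew, map_neg, h, ← lie_skew (θ y), neg_neg]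

lemma key_basis (hα : α ≠ 0) (ix jx : HVIx) :
    s.thetaSL α γ ⁅s.b ix, s.b jx⁆ = ⁅s.thetaSL α γ (s.b jx), s.thetaSL α γ (s.b ix)⁆ := by
  have hcl : ∀ ix, s.thetaSL α γ ⁅s.b ix, s.b .cl⁆
      = ⁅s.thetaSL α γ (s.b .cl), s.thetaSL α γ (s.b ix)⁆ := fun ix => by
    rw [s.central_CL, map_zero, thetaSL_basis]
    exact (s.CL_lie _).symm
  have hci : ∀ ix, s.thetaSL α γ ⁅s.b ix, s.b .ci⁆
      = ⁅s.thetaSL α γ (s.b .ci), s.thetaSL α γ (s.b ix)⁆ := fun ix => by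
    rw [s.central_CI, map_zero, thetaSL_basis]
    show (0 : 𝔏) = ⁅Complex.exp (2 * Complex.I * (γ : ℂ)) • s.CI, _⁆
    rw [smul_lie, CI_lie, smul_zero]
  have hcli : ∀ ix, s.thetaSL α γ ⁅s.b ix, s.b .cli⁆
      = ⁅s.thetaSL α γ (s.b .cli), s.thetaSL α γ (s.b ix)⁆ := fun ix => by
    rw [s.central_CLI, map_zero, thetaSL_basis]
    show (0 : 𝔏) = ⁅-(Complex.exp (Complex.I * (γ : ℂ)) • s.CLI), _⁆
    rw [neg_lie, smul_lie, CLI_lie, smul_zero, neg_zero]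
  cases jx with
  | cl => exact hcl ix
  | ci => exact hci ix
  | cli => exact hcli ix
  | l n =>
    cases ix with
    | l m => exact s.keyLL α γ hα m n
    | i m => exact key_swap (s.keyLI α γ hα n m)
    | cl => exact key_swap (hcl _)
    | ci => exact key_swap (hci _)
    | cli => exact key_swap (hcli _)
  | i n =>
    cases ix with
    | l m => exact s.keyLI α γ hα m n
    | i m => exact s.keyII α γ hα m n
    | cl => exact key_swap (hcl _)
    | ci => exact key_swap (hci _)
    | cli => exact key_swap (hcli _)

lemma key_all (hα : α ≠ 0) (x y : 𝔏) :
    s.thetaSL α γ ⁅x, y⁆ = ⁅s.thetaSL α γ y, s.thetaSL α γ x⁆ := by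
  have h1 : ∀ jx, s.brA α γ (s.b jx) = s.brB α γ (s.b jx) :=
    fun jx => s.b.ext fun ix => s.key_basis α γ hα ix jx
  have h2 : s.brC α γ x = s.brD α γ x :=
    s.b.ext fun jx => DFunLike.congr_fun (h1 jx) x
  exact DFunLike.congr_fun h2 y

/-- `x ↦ θ (θ x)` as a linear map. -/
noncomputable def thetaSq : 𝔏 →ₗ[ℂ] 𝔏 where
  toFun x := s.thetaSL α γ (s.thetaSL α γ x)
  map_add' x y := by rw [map_add, map_add]
  map_smul' c x := by rw [map_smulₛₗ, map_smulₛₗ, Complex.conj_conj]; rfl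

lemma invol_basis (hα : α ≠ 0) (ix : HVIx) :
    s.thetaSL α γ (s.thetaSL α γ (s.b ix)) = s.b ix := by
  have hα' : (α : ℂ) ≠ 0 := Complex.ofReal_ne_zero.2 hα
  have hE : Complex.exp (Complex.I * (γ : ℂ)) ≠ 0 := Complex.exp_ne_zero _
  have hE2 : Complex.exp (2 * Complex.I * (γ : ℂ)) ≠ 0 := Complex.exp_ne_zero _
  rw [thetaSL_basis]
  cases ix with
  | l n =>
    show s.thetaSL α γ (((α : ℂ) ^ n) • s.L (-n)) = s.L n
    rw [map_smulₛₗ, theta_L, neg_neg, smul_smul, map_zpow₀, Complex.conj_ofReal,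
      ← zpow_add₀ hα', add_neg_cancel, zpow_zero, one_smul]
  | i n =>
    rcases eq_or_ne n 0 with rfl | hn
    · show s.thetaSL α γ (Complex.exp (Complex.I * (γ : ℂ)) • s.I 0 +
        (2 * Complex.exp (Complex.I * (γ : ℂ))) • s.CLI) = s.I 0
      rw [map_add, map_smulₛₗ, map_smulₛₗ, theta_I0, theta_CLI, conjE, map_mul, conjE,
        map_ofNat]
      match_scalars <;> field_simp <;> ring
    · show s.thetaSL α γ (s.thetaPlusB α γ (.i n)) = s.I n
      rw [show s.thetaPlusB α γ (.i n)
          = ((α : ℂ) ^ n * Complex.exp (Complex.I * (γ : ℂ))) • s.I (-n) by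
        rw [thetaPlusB, if_neg hn]]
      rw [map_smulₛₗ, theta_I s α γ (neg_ne_zero.2 hn), neg_neg, smul_smul, map_mul,
        map_zpow₀, Complex.conj_ofReal, conjE, zpow_neg]
      have h1 : (α : ℂ) ^ n ≠ 0 := zpow_ne_zero _ hα'
      match_scalars
      field_simp
  | cl => exact s.theta_CL α γ
  | ci =>
    show s.thetaSL α γ (Complex.exp (2 * Complex.I * (γ : ℂ)) • s.CI) = s.CI
    rw [map_smulₛₗ, theta_CI, smul_smul, exp2, map_mul, conjE]
    match_scalars
    field_simp
  | cli =>
    show s.thetaSL α γ (-(Complex.exp (Complex.I * (γ : ℂ)) • s.CLI)) = s.CLI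
    rw [map_neg, map_smulₛₗ, theta_CLI, conjE, smul_neg, neg_neg, smul_smul,
      inv_mul_cancel₀ hE, one_smul]

lemma invol_all (hα : α ≠ 0) (x : 𝔏) :
    s.thetaSL α γ (s.thetaSL α γ x) = x := by
  have h : s.thetaSq α γ = LinearMap.id :=
    s.b.ext fun ix => s.invol_basis α γ hα ix
  exact DFunLike.congr_fun h x

end THV

/-- For every nonzero real `α` and real `γ`, the conjugate-linear extension `θ⁺_{α,γ}`
of the map given on basis elements by `L n ↦ αⁿ L₋ₙ`, `C_L ↦ C_L`,
`I m ↦ αᵐ e^{iγ} I₋ₘ (m ≠ 0)`, `I 0 ↦ e^{iγ} I 0 + 2 e^{iγ} C_LI`, `C_I ↦ e^{2iγ} C_I`,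
`C_LI ↦ -e^{iγ} C_LI` is a conjugate-linear anti-involution of `𝔏`. -/
theorem thetaPlus_isConjAntiInvol (𝔏 : Type*) [LieRing 𝔏] [LieAlgebra ℂ 𝔏] (s : THV 𝔏)
    (α γ : ℝ) (hα : α ≠ 0) :
    IsConjAntiInvol 𝔏 (s.thetaPlus α γ) := by
  exact ⟨s.thetaPlus_add α γ, s.thetaPlus_smul α γ,
    fun x y => s.key_all α γ hα x y, fun x => s.invol_all α γ hα x⟩
end

section
/- Let α be a nonzero complex number and let (β_m)_{m∈ℤ} be complex numbers satisfying (n−m)β_{m+n} = n·β_n·α^m − m·αⁿ·β_m for all m, n ∈ ℤ with m+n ≠ 0, and β_0 = (1/2)(β_1 α^{−1} + β_{−1} α). Then β_m = ((m+1)/2)·α^{m−1}·β_1 − ((m−1)/2)·α^{m+1}·β_{−1} for all m ∈ ℤ. -/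
/-- If `α ≠ 0` and the family `(β_m)` satisfies the recursion
`(n - m) β_{m+n} = n βₙ αᵐ - m αⁿ βₘ` for `m + n ≠ 0` together with
`β₀ = (1/2)(β₁ α⁻¹ + β₋₁ α)`, then
`β_m = ((m+1)/2) α^{m-1} β₁ - ((m-1)/2) α^{m+1} β₋₁` for all `m`. -/
theorem beta_formula (α : ℂ) (hα : α ≠ 0) (β : ℤ → ℂ)
    (hrec : ∀ m n : ℤ, m + n ≠ 0 →
      ((n : ℂ) - (m : ℂ)) * β (m + n) = (n : ℂ) * β n * α ^ m - (m : ℂ) * α ^ n * β m)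
    (h0 : β 0 = (1 / 2) * (β 1 * α⁻¹ + β (-1) * α)) :
    ∀ m : ℤ, β m = (((m : ℂ) + 1) / 2) * α ^ (m - 1) * β 1 -
      (((m : ℂ) - 1) / 2) * α ^ (m + 1) * β (-1) := by
  -- base case m = 2
  have h2 : β 2 = (((2:ℤ) : ℂ) + 1) / 2 * α ^ ((2:ℤ) - 1) * β 1 -
      ((((2:ℤ) : ℂ)) - 1) / 2 * α ^ ((2:ℤ) + 1) * β (-1) := by
    have e1 := hrec 2 1 (by norm_num)
    have e2 := hrec (-1) 3 (by norm_num)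
    norm_num [zpow_ofNat] at e1 e2 ⊢
    field_simp [zpow_ofNat] at e1 e2 ⊢
    apply mul_left_cancel₀ hα
    linear_combination 3*e1 - e2
  -- base case m = -2
  have hm2 : β (-2) = (((-2:ℤ) : ℂ) + 1) / 2 * α ^ ((-2:ℤ) - 1) * β 1 -
      ((((-2:ℤ) : ℂ)) - 1) / 2 * α ^ ((-2:ℤ) + 1) * β (-1) := by
    have e1 := hrec (-2) (-1) (by norm_num)
    have e2 := hrec 1 (-3) (by norm_num)
    norm_num [zpow_ofNat] at e1 e2 ⊢
    field_simp [zpow_ofNat] at e1 e2 ⊢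
    linear_combination e2 - 3*α^2*e1
  -- upward step
  have up : ∀ m : ℤ, 2 ≤ m →
      (β m = (((m : ℂ) + 1) / 2) * α ^ (m - 1) * β 1 -
        (((m : ℂ) - 1) / 2) * α ^ (m + 1) * β (-1)) →
      β (m+1) = (((m : ℂ) + 1 + 1) / 2) * α ^ (m + 1 - 1) * β 1 -
        (((m : ℂ) + 1 - 1) / 2) * α ^ (m + 1 + 1) * β (-1) := by
    intro m hm hind
    have hne : (1:ℂ) - (m:ℂ) ≠ 0 := by
      have : (m:ℂ) ≠ 1 := by exact_mod_cast (by omega : m ≠ 1)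
      intro h; apply this; linear_combination -h
    have e := hrec m 1 (by omega)
    push_cast at e
    apply mul_left_cancel₀ hne
    rw [e, hind]
    rw [show m + 1 - 1 = m by ring]
    simp only [zpow_add_one₀ hα, zpow_sub_one₀ hα, zpow_one]
    field_simp
    ring
  -- downward step
  have down : ∀ m : ℤ, m ≤ -2 →
      (β m = (((m : ℂ) + 1) / 2) * α ^ (m - 1) * β 1 -
        (((m : ℂ) - 1) / 2) * α ^ (m + 1) * β (-1)) →
      β (m-1) = (((m : ℂ) - 1 + 1) / 2) * α ^ (m - 1 - 1) * β 1 -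
        (((m : ℂ) - 1 - 1) / 2) * α ^ (m - 1 + 1) * β (-1) := by
    intro m hm hind
    have hne : (-1:ℂ) - (m:ℂ) ≠ 0 := by
      have : (m:ℂ) ≠ -1 := by exact_mod_cast (by omega : m ≠ -1)
      intro h; apply this; linear_combination -h
    have e := hrec m (-1) (by omega)
    push_cast at e
    rw [show m + -1 = m - 1 by ring] at e
    apply mul_left_cancel₀ hne
    rw [e, hind]
    rw [show m - 1 + 1 = m by ring]
    simp only [zpow_sub_one₀ hα, zpow_add_one₀ hα, zpow_one, zpow_neg_one]
    field_simp
    ring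
  -- all m ≥ 2
  have hup : ∀ k : ℕ, β (2 + k) = ((((2 + k : ℤ)) : ℂ) + 1) / 2 * α ^ ((2 + k : ℤ) - 1) * β 1 -
      ((((2 + k : ℤ)) : ℂ) - 1) / 2 * α ^ ((2 + k : ℤ) + 1) * β (-1) := by
    intro k
    induction k with
    | zero => simpa using h2
    | succ n ih =>
        have := up (2 + n) (by omega) ih
        rw [show ((2:ℤ) + (n+1 : ℕ)) = (2 + (n:ℤ)) + 1 by push_cast; ring]
        convert this using 3 <;> push_cast <;> ring
  -- all m ≤ -2
  have hdown : ∀ k : ℕ, β (-2 - k) = ((((-2 - k : ℤ)) : ℂ) + 1) / 2 * α ^ ((-2 - k : ℤ) - 1) * β 1 -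
      ((((-2 - k : ℤ)) : ℂ) - 1) / 2 * α ^ ((-2 - k : ℤ) + 1) * β (-1) := by
    intro k
    induction k with
    | zero => simpa using hm2
    | succ n ih =>
        have := down (-2 - n) (by omega) ih
        rw [show ((-2:ℤ) - (n+1 : ℕ)) = (-2 - (n:ℤ)) - 1 by push_cast; ring]
        convert this using 3 <;> push_cast <;> ring
  intro m
  rcases le_or_gt 2 m with hm | hm
  · have := hup (m - 2).toNat
    rwa [show (2 + ((m-2).toNat : ℤ)) = m by omega] at this
  rcases le_or_gt m (-2) with hm' | hm'
  · have := hdown (-2 - m).toNat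
    rwa [show ((-2:ℤ) - ((-2 - m).toNat : ℤ)) = m by omega] at this
  interval_cases m
  · push_cast
    norm_num [zpow_neg_one]
  · rw [h0]
    push_cast
    norm_num [zpow_neg_one]
    ring
  · push_cast
    norm_num
end

section
/- Let θ = θ⁻_{α,α_1,β_1,β_{−1}} be a conjugate-linear anti-involution of the twisted Heisenberg-Virasoro algebra 𝔏 of type (ii), and for each n ∈ ℤ let x_n ∈ ℂ be determined by conj(x_n)·α_1 + ((n+1)/2)β_1 − ((n−1)/2)α²β_{−1} = −α·x_n. Set L'_n := L_n + x_n I_n, and let C' ∈ 𝔏 be determined by ((n³−n)/12)C' = [L'_n, L'_{−n}] + 2n L'_0. Then the subalgebra Vir' of 𝔏 generated by {C', L'_n : n ∈ ℤ} is isomorphic to the Virasoro algebra (the elements L'_n, C' satisfy [L'_m, L'_n] = (n−m)L'_{m+n} + δ_{m+n,0}((m³−m)/12)C' with C' central in Vir'), and θ(L'_n) = −αⁿL'_n and θ(C') = −C'. -/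
deriving instance DecidableEq for HVIx

lemma THV.ext4 {𝔏 : Type*} [LieRing 𝔏] [LieAlgebra ℂ 𝔏] (s : THV 𝔏) {a b c d a' b' c' d' : ℂ}
    (h : a • s.I 0 + b • s.CL + c • s.CLI + d • s.CI
       = a' • s.I 0 + b' • s.CL + c' • s.CLI + d' • s.CI) :
    a = a' ∧ b = b' ∧ c = c' ∧ d = d' := by
  have h' := congrArg s.b.repr h
  simp only [THV.I, THV.CL, THV.CLI, THV.CI, map_add, map_smul, Module.Basis.repr_self] at h'
  refine ⟨?_, ?_, ?_, ?_⟩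
  · simpa [Finsupp.single_apply] using DFunLike.congr_fun h' (.i 0)
  · simpa [Finsupp.single_apply] using DFunLike.congr_fun h' .cl
  · simpa [Finsupp.single_apply] using DFunLike.congr_fun h' .cli
  · simpa [Finsupp.single_apply] using DFunLike.congr_fun h' .ci

/-- Lemma 2.6 (ii): let `θ = θ⁻_{α,α₁,β₁,β₋₁}` be a type (ii) conjugate-linear
anti-involution of `𝔏`, let `x_n` satisfy `conj(x_n) α₁ + ((n+1)/2)β₁ - ((n-1)/2)α²β₋₁ = -α x_n`,
set `L'_n := L_n + x_n I_n` and let `C'` be determined by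
`((n³-n)/12) C' = [L'_n, L'_{-n}] + 2n L'_0`. Then `L'_n, C'` satisfy the Virasoro
relations (so the subalgebra `Vir'` they generate is isomorphic to the Virasoro algebra),
`C'` is central in `Vir'`, and `θ(L'_n) = -αⁿ L'_n`, `θ(C') = -C'`. -/
theorem virPrime (𝔏 : Type*) [LieRing 𝔏] [LieAlgebra ℂ 𝔏] (s : THV 𝔏)
    (θ : 𝔏 → 𝔏) (hθ : IsConjAntiInvol 𝔏 θ)
    (α α₁ β₁ βm : ℂ)
    (habs : ‖α‖ = 1) (habs₁ : ‖α₁‖ = 1)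
    (hc₁ : α₁ * (starRingEnd ℂ) β₁ = (starRingEnd ℂ) α * β₁)
    (hc₂ : α * βm = α₁ * (starRingEnd ℂ) βm)
    (hc₃ : ((starRingEnd ℂ) α - α) * βm = 0)
    (hc₄ : β₁ * βm * (1 + ((starRingEnd ℂ) α) ^ 2) = 0)
    (hθL : ∀ n : ℤ, θ (s.L n) = -(α ^ n) • s.L n +
      ((((n : ℂ) + 1) / 2) * α ^ (n - 1) * β₁ -
        (((n : ℂ) - 1) / 2) * α ^ (n + 1) * βm) • s.I n)
    (hθCL : θ s.CL = -s.CL - (12 * (α⁻¹ * β₁ - α * βm)) • s.CLI +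
      (14 * βm * β₁ - 3 * α ^ (-2 : ℤ) * β₁ ^ 2 - 3 * α ^ 2 * βm ^ 2) • s.CI)
    (hθI : ∀ n : ℤ, n ≠ 0 → θ (s.I n) = (α₁ * α ^ (n - 1)) • s.I n)
    (hθI0 : θ (s.I 0) = (α₁ * α⁻¹) • s.I 0 - (α₁ * α ^ (-2 : ℤ) * β₁) • s.CI)
    (hθCI : θ s.CI = -(α₁ ^ 2 * α ^ (-2 : ℤ)) • s.CI)
    (hθCLI : θ s.CLI = (α₁ * α⁻¹) • s.CLI +
      ((1 / 2) * (α₁ * α ^ (-2 : ℤ) * β₁ - α₁ * βm)) • s.CI)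
    (x : ℤ → ℂ)
    (hx : ∀ n : ℤ, (starRingEnd ℂ) (x n) * α₁ + (((n : ℂ) + 1) / 2) * β₁ -
      (((n : ℂ) - 1) / 2) * α ^ 2 * βm = -α * x n)
    (L' : ℤ → 𝔏) (hL' : ∀ n : ℤ, L' n = s.L n + x n • s.I n)
    (C' : 𝔏)
    (hC' : ∀ n : ℤ, (((n : ℂ) ^ 3 - (n : ℂ)) / 12) • C' =
      ⁅L' n, L' (-n)⁆ + (2 * (n : ℂ)) • L' 0) :
    (∀ m n : ℤ, ⁅L' m, L' n⁆ = ((n : ℂ) - (m : ℂ)) • L' (m + n) +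
      (if m + n = 0 then (((m : ℂ) ^ 3 - (m : ℂ)) / 12) • C' else 0)) ∧
    (∀ n : ℤ, ⁅L' n, C'⁆ = 0) ∧
    (∀ n : ℤ, θ (L' n) = -(α ^ n) • L' n) ∧
    θ C' = -C' := by
  have hα : α ≠ 0 := by
    intro h; rw [h] at habs; simp at habs
  have hbr : ∀ m n : ℤ, ⁅L' m, L' n⁆ =
      ((n : ℂ) - (m : ℂ)) • s.L (m + n) + ((n : ℂ) * x n - (m : ℂ) * x m) • s.I (m + n) +
      (if m + n = 0 then
        ((((m : ℂ) ^ 3 - m) / 12) • s.CL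
          + ((((m : ℂ) ^ 2 - m) * x n - ((n : ℂ) ^ 2 - n) * x m)) • s.CLI
          + ((n : ℂ) * (x m * x n)) • s.CI)
      else 0) := by
    intro m n
    have h3 : ⁅s.I m, s.L n⁆ = -((m : ℂ) • s.I (m + n)
        + (if m + n = 0 then ((n : ℂ) ^ 2 - n) • s.CLI else 0)) := by
      rw [← lie_skew]
      simp only [THV.L, THV.I, THV.CLI]
      rw [s.bracket_LI n m, add_comm n m]
    rw [hL' m, hL' n]
    rw [add_lie, lie_add, lie_add, lie_smul, lie_smul, smul_lie, smul_lie, h3]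
    simp only [THV.L, THV.I, THV.CL, THV.CLI, THV.CI] at *
    rw [s.bracket_LL m n, s.bracket_LI m n, s.bracket_II m n]
    by_cases h : m + n = 0
    · simp only [h, if_pos]
      match_scalars <;> ring
    · simp only [h, if_neg, if_false]
      match_scalars <;> ring
  have hkey : ∀ n : ℤ, (((n : ℂ) ^ 3 - n) / 12) • C' =
      (2 * (n : ℂ) * x 0 - ((n : ℂ) * x (-n) + (n : ℂ) * x n)) • s.I 0
      + (((n : ℂ) ^ 3 - n) / 12) • s.CL
      + (((n : ℂ) ^ 2 - n) * x (-n) - ((n : ℂ) ^ 2 + n) * x n) • s.CLI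
      + (-(n : ℂ) * (x n * x (-n))) • s.CI := by
    intro n
    rw [hC' n, hbr n (-n), hL' 0]
    have h0 : n + -n = 0 := by ring
    rw [h0]
    simp only [if_pos rfl]
    push_cast
    match_scalars <;> ring
  have hCrep : C' = (8 * x 0 - 4 * x (-2) - 4 * x 2) • s.I 0 + s.CL
      + (4 * x (-2) - 12 * x 2) • s.CLI + (-4 * (x 2 * x (-2))) • s.CI := by
    have h2 := hkey 2
    have hne : ((((2 : ℤ) : ℂ) ^ 3 - ((2 : ℤ) : ℂ)) / 12) ≠ 0 := by norm_num
    have hh : C' = ((((2 : ℤ) : ℂ) ^ 3 - ((2 : ℤ) : ℂ)) / 12)⁻¹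
        • (((((2 : ℤ) : ℂ) ^ 3 - ((2 : ℤ) : ℂ)) / 12) • C') := (inv_smul_smul₀ hne C').symm
    rw [hh, h2]
    match_scalars <;> push_cast <;> norm_num <;> ring
  have E : ∀ n : ℤ,
      ((((n : ℂ) ^ 3 - n) / 12) * (8 * x 0 - 4 * x (-2) - 4 * x 2)
        = 2 * (n : ℂ) * x 0 - ((n : ℂ) * x (-n) + (n : ℂ) * x n))
      ∧ ((((n : ℂ) ^ 3 - n) / 12) * (4 * x (-2) - 12 * x 2)
        = ((n : ℂ) ^ 2 - n) * x (-n) - ((n : ℂ) ^ 2 + n) * x n)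
      ∧ ((((n : ℂ) ^ 3 - n) / 12) * (-4 * (x 2 * x (-2)))
        = -(n : ℂ) * (x n * x (-n))) := by
    intro n
    have h := hkey n
    rw [hCrep, smul_add, smul_add, smul_add, smul_smul, smul_smul, smul_smul] at h
    obtain ⟨h1, h2, h3, h4⟩ := s.ext4 h
    exact ⟨h1, h3, h4⟩
  -- small n facts
  have E1 := E 1
  have E3 := E 3
  have E4 := E 4
  push_cast at E1 E3 E4
  norm_num at E1 E3 E4
  obtain ⟨e1a, e1b, -⟩ := E1
  obtain ⟨e3a, e3b, e3c⟩ := E3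
  obtain ⟨e4a, e4b, e4c⟩ := E4
  have hx1 : x 1 = 0 := by linear_combination e1b
  have hβ : β₁ = 0 := by
    have h := hx 1
    rw [hx1] at h
    push_cast at h
    simp only [map_zero, zero_mul, mul_zero] at h
    linear_combination h
  have hP : 8 * x 0 - 4 * x (-2) - 4 * x 2 = 0 := by
    have hsq : (8 * x 0 - 4 * x (-2) - 4 * x 2) ^ 2 = 0 := by
      linear_combination (-32 / 7 * x 0 + 32 / 35 * x 2 + 32 / 7 * x (-2) + 144 / 35 * x 3) * e3a
        + (-16 / 7 * x 0 + 16 / 35 * x 2 + 16 / 7 * x (-2) - 36 / 35 * x 3) * e3b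
        + (24 / 7 * x 0 - 6 / 7 * x 2 - 18 / 7 * x (-2) - 8 / 7 * x 4) * e4a
        + (8 / 7 * x 0 - 2 / 7 * x 2 - 6 / 7 * x (-2) + 8 / 35 * x 4) * e4b
        + (216 / 35 : ℂ) * e3c + (-64 / 35 : ℂ) * e4c
    exact pow_eq_zero_iff (by norm_num) |>.mp hsq
  have hA0 : -(x 0) + ((4 * x (-2) - 12 * x 2) - (8 * x 0 - 4 * x (-2) - 4 * x 2)) / 24 = 0 := by
    have hsq : (-(x 0) + ((4 * x (-2) - 12 * x 2) - (8 * x 0 - 4 * x (-2) - 4 * x 2)) / 24) ^ 2 = 0 := by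
      linear_combination (-2 / 9 * x 0 + 2 / 45 * x 2 + 2 / 9 * x (-2) + 1 / 5 * x 3) * e3a
        + (-1 / 9 * x 0 + 1 / 45 * x 2 + 1 / 9 * x (-2) - 1 / 20 * x 3) * e3b
        + (1 / 2 * x 0 - 1 / 4 * x 2 - 1 / 4 * x (-2)) * hP
        + (3 / 10 : ℂ) * e3c
    exact pow_eq_zero_iff (by norm_num) |>.mp hsq
  have hQ : 4 * x (-2) - 12 * x 2 = 24 * x 0 := by linear_combination 24 * hA0 + hP
  have hx2 : x 2 = -x 0 := by linear_combination (-1 / 16 : ℂ) * hP - (1 / 16 : ℂ) * hQ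
  have hxm2 : x (-2) = 3 * x 0 := by linear_combination (-3 / 16 : ℂ) * hP + (1 / 16 : ℂ) * hQ
  have hxall : ∀ n : ℤ, x n = (1 - (n : ℂ)) * x 0 := by
    intro n
    rcases eq_or_ne n 0 with rfl | hn
    · push_cast; ring
    · have hnc : (n : ℂ) ≠ 0 := Int.cast_ne_zero.mpr hn
      obtain ⟨h1, h2, -⟩ := E n
      rw [hP] at h1
      rw [hQ] at h2
      have key : 2 * (n : ℂ) ^ 2 * x n = 2 * (n : ℂ) ^ 2 * ((1 - (n : ℂ)) * x 0) := by
        linear_combination ((n : ℂ) - 1) * h1 + h2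
      exact mul_left_cancel₀ (by simp [hnc]) key
  have hCval : C' = s.CL + (24 * x 0) • s.CLI + (12 * x 0 ^ 2) • s.CI := by
    rw [hCrep, hx2, hxm2]
    match_scalars <;> ring
  have h0 := hx 0
  rw [hβ] at h0
  push_cast at h0
  have hk : (starRingEnd ℂ) (x 0) * α₁ = -α * x 0 - α ^ 2 * βm / 2 := by
    linear_combination h0
  have hk2 : ((starRingEnd ℂ) (x 0) * α₁) ^ 2 = (-α * x 0 - α ^ 2 * βm / 2) ^ 2 := by
    rw [hk]
  refine ⟨?_, ?_, ?_, ?_⟩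
  · intro m n
    by_cases h : m + n = 0
    · rw [if_pos h]
      have hn : n = -m := by omega
      subst hn
      rw [hC' m, show m + -m = 0 from by ring]
      push_cast
      module
    · rw [if_neg h, hbr m n, if_neg h, hL' (m + n), hxall n, hxall m, hxall (m + n)]
      push_cast
      match_scalars <;> ring
  · intro n
    rw [hCval, lie_add, lie_add, lie_smul, lie_smul]
    simp only [THV.CL, THV.CLI, THV.CI, s.central_CL, s.central_CLI, s.central_CI,
      smul_zero, add_zero]
  · intro n
    rw [hL' n, hθ.map_add, hθ.map_smul, hθL n]
    rcases eq_or_ne n 0 with rfl | hn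
    · rw [hθI0, hβ]
      push_cast
      match_scalars
      · simp [zpow_zero]
      · have e1 : α ^ (-1 : ℤ) = α⁻¹ := zpow_neg_one α
        have e2 : α ^ (1 : ℤ) = α := zpow_one α
        rw [e1, e2]
        field_simp
        linear_combination 2 * hk
      · simp
    · rw [hθI n hn]
      have e0 : α ^ n = α ^ (n - 1) * α := by
        rw [← zpow_add_one₀ hα (n - 1), show n - 1 + 1 = n from by ring]
      have e1 : α ^ (n + 1) = α ^ (n - 1) * (α * α) := by
        rw [show n + 1 = n - 1 + 1 + 1 from by ring, zpow_add_one₀ hα, zpow_add_one₀ hα, mul_assoc]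
      match_scalars
      · rw [e0]
      · rw [e0, e1]
        linear_combination α ^ (n - 1) * hx n
  · rw [hCval, hθ.map_add, hθ.map_add, hθ.map_smul, hθ.map_smul, hθCL, hθCLI, hθCI, hβ]
    simp only [map_mul, map_ofNat, map_pow]
    have em2 : α ^ (-2 : ℤ) = (α * α)⁻¹ := by
      rw [zpow_neg, show (2 : ℤ) = 1 + 1 from rfl, zpow_add_one₀ hα, zpow_one]
    rw [em2]
    match_scalars
    · ring
    · field_simp
      linear_combination 24 * hk
    · field_simp
      linear_combination (-24 : ℂ) * hk2 + (-24 * α ^ 2 * βm) * hk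
end

section
/- Let a ∈ [0,1) be real, let b ∈ 1/2 + √−1·ℝ, let c ∈ ℂ, and let V be a module over the twisted Heisenberg-Virasoro algebra 𝔏 with basis {v_k : k ∈ ℤ} on which C_L, C_I, C_{LI} act as zero, L_m·v_k = (a+k+mb)v_{m+k} for all m,k ∈ ℤ, I_0·v_k = c·v_k for all k ∈ ℤ, and I_1·v_k = μ_k v_{k+1} for some scalars μ_k ∈ ℂ. Then μ_k = c for all k ∈ ℤ, and consequently I_m·v_k = c·v_{m+k} for all m, k ∈ ℤ. -/
/-- Claim 2 in the proof of Theorem 3.4: if `V` has a basis `{v_k}` with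
`C_L, C_I, C_LI` acting as zero, `L_m v_k = (a + k + mb) v_{m+k}`, `I_0 v_k = c v_k`
and `I_1 v_k = μ_k v_{k+1}`, where `0 ≤ a < 1` and `Re b = 1/2`, then `μ_k = c`
for all `k` and consequently `I_m v_k = c v_{m+k}` for all `m, k`. -/
theorem claim_two (𝔏 : Type*) [LieRing 𝔏] [LieAlgebra ℂ 𝔏] (s : THV 𝔏)
    (V : Type*) [AddCommGroup V] [Module ℂ V] [LieRingModule 𝔏 V] [LieModule ℂ 𝔏 V]
    (a : ℝ) (ha0 : 0 ≤ a) (ha1 : a < 1) (b c : ℂ) (hb : b.re = 1 / 2)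
    (v : Module.Basis ℤ ℂ V) (μ : ℤ → ℂ)
    (hCL : ∀ k : ℤ, ⁅s.CL, v k⁆ = 0)
    (hCI : ∀ k : ℤ, ⁅s.CI, v k⁆ = 0)
    (hCLI : ∀ k : ℤ, ⁅s.CLI, v k⁆ = 0)
    (hL : ∀ m k : ℤ, ⁅s.L m, v k⁆ = ((a : ℂ) + (k : ℂ) + (m : ℂ) * b) • v (m + k))
    (hI0 : ∀ k : ℤ, ⁅s.I 0, v k⁆ = c • v k)
    (hI1 : ∀ k : ℤ, ⁅s.I 1, v k⁆ = μ k • v (k + 1)) :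
    (∀ k : ℤ, μ k = c) ∧ (∀ m k : ℤ, ⁅s.I m, v k⁆ = c • v (m + k)) := by

  have hb0 : b ≠ 0 := by
    intro h; rw [h] at hb; norm_num at hb
  have hb1 : (1:ℂ) - b ≠ 0 := by
    intro h
    have hb' : b = 1 := by linear_combination -h
    rw [hb'] at hb; norm_num at hb
  have hI1' : ∀ k : ℤ, ⁅s.b (.i 1), v k⁆ = μ k • v (k + 1) := hI1
  have hI0' : ∀ k : ℤ, ⁅s.b (.i 0), v k⁆ = c • v k := hI0
  have hL' : ∀ m k : ℤ, ⁅s.b (.l m), v k⁆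
      = ((a : ℂ) + (k : ℂ) + (m : ℂ) * b) • v (m + k) := hL
  have hCLI' : ∀ k : ℤ, ⁅s.b .cli, v k⁆ = 0 := hCLI
  have hcoef : ∀ (c₁ c₂ : ℂ) (k : ℤ), c₁ • v k = c₂ • v k → c₁ = c₂ := by
    intro c₁ c₂ k h
    have h2 := congrArg (fun w => v.repr w k) h
    simpa using h2
  have hI : ∀ m k : ℤ, ⁅s.b (.i (m + 1)), v k⁆
      = (μ k * ((a : ℂ) + (k : ℂ) + 1 + (m : ℂ) * b)
          - ((a : ℂ) + (k : ℂ) + (m : ℂ) * b) * μ (m + k)) • v (m + k + 1) := by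
    intro m k
    have h1 := congrArg (fun x : 𝔏 => ⁅x, v k⁆) (s.bracket_LI m 1)
    rw [lie_lie, hI1' k, hL' m k, lie_smul, hL' m (k+1), lie_smul, hI1' (m+k)] at h1
    rw [add_lie, smul_lie, Int.cast_one, one_smul] at h1
    have hite : ⁅(if m + 1 = 0 then ((m:ℂ)^2 - (m:ℂ)) • s.b .cli else 0), v k⁆ = 0 := by
      split_ifs with h
      · rw [smul_lie, hCLI' k, smul_zero]
      · rw [zero_lie]
    rw [hite, add_zero] at h1
    rw [← h1, show m + (k+1) = m + k + 1 from by ring, smul_smul, smul_smul, ← sub_smul]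
    congr 1
    push_cast
    ring
  have hE1 : ∀ k : ℤ, c = μ k * ((a:ℂ) + k + 1 - b) - ((a:ℂ) + k - b) * μ (k - 1) := by
    intro k
    have h := hI (-1) k
    rw [show (-1 : ℤ) + 1 = 0 from by ring, show (-1 : ℤ) + k = k - 1 from by ring,
        show k - 1 + 1 = k from by ring, hI0' k] at h
    have h2 := hcoef _ _ _ h
    push_cast at h2
    linear_combination h2
  have hB : ∀ k : ℤ, ⁅s.b (.i 2), v k⁆
      = (μ k * ((a:ℂ)+k+1+b) - ((a:ℂ)+k+b) * μ (k+1)) • v (k+2) := by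
    intro k
    have h := hI 1 k
    rw [show (1:ℤ)+1 = 2 from rfl, show (1:ℤ)+k = k+1 from by ring,
        show k+1+1 = k+2 from by ring] at h
    rw [h]
    congr 1
    push_cast
    ring
  have hE3 : ∀ k : ℤ, 2*c = (μ k * ((a:ℂ)+k+1+b) - ((a:ℂ)+k+b)*μ (k+1)) * ((a:ℂ)+k+2-2*b)
      - ((a:ℂ)+k-2*b) * (μ (k-2) * ((a:ℂ)+k-1+b) - ((a:ℂ)+k-2+b) * μ (k-1)) := by
    intro k
    have h1 := congrArg (fun x : 𝔏 => ⁅x, v k⁆) (s.bracket_LI (-2) 2)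
    rw [show (-2:ℤ) + 2 = 0 from by ring, if_pos rfl] at h1
    rw [lie_lie, hB k, hL' (-2) k, lie_smul, lie_smul, hL' (-2) (k+2), hB (-2+k)] at h1
    rw [show (-2:ℤ) + (k+2) = k from by ring, show (-2:ℤ) + k + 2 = k from by ring] at h1
    rw [add_lie, smul_lie, smul_lie, hI0' k, hCLI' k, smul_zero, add_zero] at h1
    rw [show (-2:ℤ) + k = k - 2 from by ring] at h1
    rw [smul_smul, smul_smul, smul_smul, ← sub_smul] at h1
    have h2 := hcoef _ _ _ h1
    rw [show k - 2 + 1 = k - 1 from by ring] at h2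
    push_cast at h2
    linear_combination -h2
  have hg : ∀ k : ℤ, ((a:ℂ) + k + 1 - b) * (μ k - c) = ((a:ℂ) + 1 - b) * (μ 0 - c) := by
    intro k
    induction k using Int.induction_on with
    | zero => push_cast; ring
    | succ n ih =>
        have e := hE1 ((n:ℤ) + 1)
        rw [show (n:ℤ) + 1 - 1 = n from by ring] at e
        push_cast at e ih ⊢
        linear_combination ih - e
    | pred n ih =>
        have e := hE1 (-(n:ℤ))
        push_cast at e ih ⊢
        linear_combination ih + e
  have hR : ∀ k : ℤ, (μ (k+1) - c) + (μ (k-2) - c) = (μ k - c) + (μ (k-1) - c) := by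
    intro k
    have h5 := hE3 k
    have h1 := hg (k+1)
    have h2 := hg k
    have h3 := hg (k-1)
    have h4 := hg (k-2)
    push_cast at h1 h2 h3 h4 h5
    have key : 2*b*(1-b) * (((μ (k+1) - c) + (μ (k-2) - c)) - ((μ k - c) + (μ (k-1) - c))) = 0 := by
      linear_combination h5 + ((a:ℂ)+k+2)*h2 - ((a:ℂ)+k)*h1 - ((a:ℂ)+k)*h4 + ((a:ℂ)+k-2)*h3
    have h2b : (2*b*(1-b) : ℂ) ≠ 0 := mul_ne_zero (mul_ne_zero two_ne_zero hb0) hb1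
    have hz := (mul_eq_zero.mp key).resolve_left h2b
    linear_combination hz
  have h0 := hg 0
  have h2' := hg 2
  have h4' := hg 4
  push_cast at h0 h2' h4'
  have hRa := hR 2
  have hRb := hR 3
  norm_num at hRa hRb
  have hy2 : μ 2 - c = μ 0 - c := by
    linear_combination h4'/4 - (((a:ℂ)+5-b)/4) * hRa - (((a:ℂ)+5-b)/4) * hRb - h2'/2
  have hy0 : μ 0 = c := by
    linear_combination h2'/2 - (((a:ℂ)+3-b)/2)*hy2
  have hgz : ∀ k : ℤ, ((a:ℂ) + k + 1 - b) * (μ k - c) = 0 := by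
    intro k
    rw [hg k, hy0]
    ring
  have hA : ∀ k : ℤ, k ≠ -1 → ((a:ℂ) + k + 1 - b) ≠ 0 := by
    intro k hk h
    have hre := congrArg Complex.re h
    simp [Complex.add_re, Complex.sub_re, Complex.ofReal_re, Complex.intCast_re,
      Complex.one_re, hb] at hre
    rcases (show k ≤ -2 ∨ 0 ≤ k from by omega) with h' | h'
    · have hkr : (k:ℝ) ≤ -2 := by exact_mod_cast h'
      linarith
    · have hkr : (0:ℝ) ≤ (k:ℝ) := by exact_mod_cast h'
      linarith
  have hyk : ∀ k : ℤ, k ≠ -1 → μ k = c := by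
    intro k hk
    have h := (mul_eq_zero.mp (hgz k)).resolve_left (hA k hk)
    linear_combination h
  have hmu : ∀ k : ℤ, μ k = c := by
    intro k
    rcases eq_or_ne k (-1) with rfl | hk
    · have hr := hR 0
      norm_num at hr
      have e1 := hyk 1 (by norm_num)
      have e2 := hyk (-2) (by norm_num)
      linear_combination e1 + e2 - hy0 - hr
    · exact hyk k hk
  refine ⟨hmu, ?_⟩
  intro m k
  have h := hI (m - 1) k
  rw [show m - 1 + 1 = m from by ring, show m - 1 + k + 1 = m + k from by ring] at h
  rw [hmu k, hmu (m - 1 + k)] at h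
  show ⁅s.b (.i m), v k⁆ = c • v (m + k)
  rw [h]
  congr 1
  push_cast
  ring
end

section
/- Any conjugate-linear anti-involution of the Virasoro algebra Vir is one of the following two types: (i) θ⁺_α with θ⁺_α(L_n) = αⁿL_{−n} and θ⁺_α(C_L) = C_L, for some nonzero real number α; or (ii) θ⁻_α with θ⁻_α(L_n) = −αⁿL_n and θ⁻_α(C_L) = −C_L, for some complex number α of modulus one. -/
/-- Index type for the standard basis of the Virasoro algebra. -/
inductive VirIx : Type
  | l : ℤ → VirIx
  | c : VirIx

/-- A complex Lie algebra `𝔤` equipped with the structure of the Virasoro algebra: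
a basis `{L_n, C_L}` with the defining Lie brackets. -/
structure VirS (𝔤 : Type*) [LieRing 𝔤] [LieAlgebra ℂ 𝔤] where
  b : Module.Basis VirIx ℂ 𝔤
  bracket_LL : ∀ m n : ℤ, ⁅b (.l m), b (.l n)⁆ =
    ((n : ℂ) - (m : ℂ)) • b (.l (m + n)) +
      (if m + n = 0 then (((m : ℂ) ^ 3 - (m : ℂ)) / 12) • b .c else 0)
  central_C : ∀ x : 𝔤, ⁅x, b .c⁆ = 0

namespace VirS

variable {𝔤 : Type*} [LieRing 𝔤] [LieAlgebra ℂ 𝔤]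

/-- The element `L n`. -/
noncomputable def L (s : VirS 𝔤) (n : ℤ) : 𝔤 := s.b (.l n)
/-- The central element `C_L`. -/
noncomputable def C (s : VirS 𝔤) : 𝔤 := s.b .c

end VirS

namespace VirS

variable {𝔤 : Type*} [LieRing 𝔤] [LieAlgebra ℂ 𝔤]

/-- Images of the basis vectors under `θ⁺_α`. -/
noncomputable def thetaPlusB (s : VirS 𝔤) (α : ℝ) : VirIx → 𝔤
  | .l n => ((α : ℂ) ^ n) • s.L (-n)
  | .c => s.C

/-- The map `θ⁺_α`, defined on basis elements by `θ⁺_α(L n) = αⁿ L₋ₙ`, `θ⁺_α(C_L) = C_L`,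
and extended conjugate-linearly. -/
noncomputable def thetaPlus (s : VirS 𝔤) (α : ℝ) : 𝔤 → 𝔤 :=
  fun x => (s.b.repr x).sum fun ix c => (starRingEnd ℂ) c • s.thetaPlusB α ix

/-- `V` is a weight module over the Virasoro algebra: `C_L` acts by a scalar and `V` is the
direct sum of finite-dimensional eigenspaces of `L 0`. -/
def IsWeightModule (s : VirS 𝔤) (V : Type*) [AddCommGroup V] [Module ℂ V]
    [LieRingModule 𝔤 V] [LieModule ℂ 𝔤 V] : Prop :=
  (∃ z : ℂ, ∀ v : V, ⁅s.C, v⁆ = z • v) ∧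
  (∀ μ : ℂ, FiniteDimensional ℂ
    (Module.End.eigenspace (LieModule.toEnd ℂ 𝔤 V (s.L 0)) μ)) ∧
  (⨆ μ : ℂ, Module.End.eigenspace (LieModule.toEnd ℂ 𝔤 V (s.L 0)) μ) = ⊤

end VirS

namespace CP
set_option linter.unusedSectionVars false
open Finsupp

variable {𝔤 : Type*} [LieRing 𝔤] [LieAlgebra ℂ 𝔤] (s : VirS 𝔤) {θ : 𝔤 → 𝔤}

local notation "conj" => starRingEnd ℂ

lemma lie_c_left (x : 𝔤) : ⁅s.b .c, x⁆ = 0 := by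
  rw [← lie_skew, s.central_C, neg_zero]

lemma theta_zero (hθ : IsConjAntiInvol 𝔤 θ) : θ 0 = 0 := by
  have := hθ.map_smul 0 0
  simpa using this

lemma eq_zero_of_theta (hθ : IsConjAntiInvol 𝔤 θ) {x : 𝔤} (h : θ x = 0) : x = 0 := by
  have := hθ.invol x
  rw [h, theta_zero hθ] at this; exact this.symm

/-- expansion of any element as Finsupp.sum over basis -/
lemma expand (x : 𝔤) : x = (s.b.repr x).sum fun i c => c • s.b i := by
  conv_lhs => rw [← s.b.linearCombination_repr x]
  rw [Finsupp.linearCombination_apply]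

lemma theta_sum (hθ : IsConjAntiInvol 𝔤 θ) (f : VirIx →₀ ℂ) :
    θ (f.sum fun i c => c • s.b i) = f.sum fun i c => conj c • θ (s.b i) := by
  have h := map_finsuppSum (AddMonoidHom.mk' θ hθ.map_add) f (fun i c => c • s.b i)
  simp only [AddMonoidHom.mk'_apply] at h ⊢
  rw [h]
  exact Finsupp.sum_congr fun i _ => hθ.map_smul _ _

lemma repr_theta (hθ : IsConjAntiInvol 𝔤 θ) (x : 𝔤) (j : VirIx) :
    s.b.repr (θ x) j = (s.b.repr x).sum fun i c => conj c * s.b.repr (θ (s.b i)) j := by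
  rw [← Module.Basis.coord_apply]
  conv_lhs => rw [expand s x, theta_sum s hθ]
  rw [map_finsuppSum (s.b.coord j)]
  exact Finsupp.sum_congr fun i _ => by simp [Module.Basis.coord_apply]

lemma sum_lie' {ι : Type*} (t : Finset ι) (f : ι → 𝔤) (z : 𝔤) :
    ⁅∑ i ∈ t, f i, z⁆ = ∑ i ∈ t, ⁅f i, z⁆ :=
  map_sum (AddMonoidHom.mk' (fun x => ⁅x, z⁆) (fun a b => add_lie a b z)) f t

lemma lie_sum' {ι : Type*} (t : Finset ι) (f : ι → 𝔤) (z : 𝔤) :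
    ⁅z, ∑ i ∈ t, f i⁆ = ∑ i ∈ t, ⁅z, f i⁆ :=
  map_sum (AddMonoidHom.mk' (fun x => ⁅z, x⁆) (fun a b => lie_add z a b)) f t

/-- master expansion of the coordinates of a bracket -/
lemma coord_lie (x y : 𝔤) (j : VirIx) :
    s.b.repr ⁅x, y⁆ j =
      (s.b.repr x).sum fun i c => (s.b.repr y).sum fun i' d =>
        c * d * s.b.repr ⁅s.b i, s.b i'⁆ j := by
  conv_lhs => rw [expand s x, expand s y]
  simp only [Finsupp.sum]
  rw [sum_lie']
  simp only [lie_sum', smul_lie, lie_smul, smul_smul]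
  rw [map_sum, Finset.sum_apply']
  refine Finset.sum_congr rfl fun i _ => ?_
  rw [map_sum, Finset.sum_apply']
  refine Finset.sum_congr rfl fun i' _ => ?_
  simp only [map_smul, Finsupp.smul_apply, smul_eq_mul]
  ring

end CP

section part2
namespace CP
open Finsupp
variable {𝔤 : Type*} [LieRing 𝔤] [LieAlgebra ℂ 𝔤] (s : VirS 𝔤) {θ : 𝔤 → 𝔤}
local notation "conj" => starRingEnd ℂ

lemma fsum_zero {α M N : Type*} [Zero M] [AddCommMonoid N] (f : α →₀ M) (g : α → M → N)
    (h : ∀ i ∈ f.support, g i (f i) = 0) : f.sum g = 0 :=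
  Finset.sum_eq_zero h

lemma coord_ll (k m j : ℤ) :
    s.b.repr ⁅s.b (.l k), s.b (.l m)⁆ (.l j) = if k + m = j then ((m : ℂ) - k) else 0 := by
  classical
  rw [s.bracket_LL]
  by_cases h : k + m = 0 <;>
    simp [h, Finsupp.single_apply, apply_ite (fun f : VirIx →₀ ℂ => f (.l j))] <;>
    (split <;> simp)

lemma coord_lc (x : 𝔤) (j : VirIx) : s.b.repr ⁅x, s.b .c⁆ j = 0 := by
  rw [s.central_C, map_zero]; rfl

lemma coord_cl (x : 𝔤) (j : VirIx) : s.b.repr ⁅s.b .c, x⁆ j = 0 := by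
  rw [lie_c_left, map_zero]; rfl

lemma coord_ll_c (k m : ℤ) :
    s.b.repr ⁅s.b (.l k), s.b (.l m)⁆ VirIx.c
      = if k + m = 0 then (((k : ℂ) ^ 3 - k) / 12) else 0 := by
  classical
  rw [s.bracket_LL]
  by_cases h : k + m = 0 <;>
    simp [h, Finsupp.single_apply, apply_ite (fun f : VirIx →₀ ℂ => f VirIx.c)]

/-- key collapsing lemma for the coefficient of a bracket at an "extremal" index -/
lemma repr_lie_of_support (x y : 𝔤) (k₀ m₀ : ℤ)
    (hx : ∀ k m : ℤ, k + m = k₀ + m₀ → ¬(k = k₀ ∧ m = m₀) →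
      s.b.repr x (.l k) = 0 ∨ s.b.repr y (.l m) = 0) :
    s.b.repr ⁅x, y⁆ (.l (k₀ + m₀)) =
      s.b.repr x (.l k₀) * s.b.repr y (.l m₀) * ((m₀ : ℂ) - k₀) := by
  classical
  rw [coord_lie]
  rw [Finsupp.sum_eq_single (VirIx.l k₀) ?_ ?_]
  · rw [Finsupp.sum_eq_single (VirIx.l m₀) ?_ ?_]
    · rw [coord_ll]; simp
    · rintro (⟨m⟩ | _) hd hne
      · rw [coord_ll]
        rcases eq_or_ne (k₀ + m) (k₀ + m₀) with h | h
        · rcases hx k₀ m h (by simp at hne ⊢; omega) with h0 | h0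
          · rw [h0]; ring
          · exact absurd h0 hd
        · rw [if_neg h]; ring
      · rw [coord_lc]; ring
    · intro _; simp
  · rintro (⟨k⟩ | _) hc hne
    · refine fsum_zero _ _ fun i' hd => ?_
      cases i' with
      | l m =>
        rw [coord_ll]
        rcases eq_or_ne (k + m) (k₀ + m₀) with h | h
        · rcases hx k m h (by simp at hne ⊢; omega) with h0 | h0
          · exact absurd h0 hc
          · exact absurd h0 (Finsupp.mem_support_iff.mp hd)
        · rw [if_neg h]; ring
      | c => rw [coord_lc]; ring
    · exact fsum_zero _ _ fun i' _ => by rw [coord_cl]; ring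
  · intro _
    exact fsum_zero _ _ fun i' _ => by simp

lemma repr_lie_L0_l (y : 𝔤) (m : ℤ) :
    s.b.repr ⁅s.L 0, y⁆ (.l m) = (m : ℂ) * s.b.repr y (.l m) := by
  have h := repr_lie_of_support s (s.L 0) y 0 m ?_
  · rw [zero_add] at h
    rw [h, VirS.L, Module.Basis.repr_self]
    classical
    simp [Finsupp.single_apply]
    ring
  · intro k m' hsum hne
    left
    rw [VirS.L, Module.Basis.repr_self]
    classical
    rw [Finsupp.single_apply, if_neg]
    simp only [VirIx.l.injEq]
    omega

lemma repr_lie_L0_c (y : 𝔤) : s.b.repr ⁅s.L 0, y⁆ VirIx.c = 0 := by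
  classical
  rw [VirS.L, coord_lie]
  refine fsum_zero _ _ fun i hc => ?_
  refine fsum_zero _ _ fun i' hd => ?_
  rw [Module.Basis.repr_self]
  cases i with
  | c => rw [Finsupp.single_apply]; simp
  | l k =>
    rw [Finsupp.single_apply]
    rcases eq_or_ne (VirIx.l 0) (VirIx.l k) with h | h
    · simp only [VirIx.l.injEq] at h
      subst h
      cases i' with
      | l m =>
        rw [coord_ll_c]
        rcases eq_or_ne ((0:ℤ) + m) 0 with h2 | h2
        · rw [if_pos h2]; norm_num
        · rw [if_neg h2]; ring
      | c => rw [coord_lc]; ring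
    · rw [if_neg h]; ring

end CP
end part2

section part3
namespace CP
open Finsupp
variable {𝔤 : Type*} [LieRing 𝔤] [LieAlgebra ℂ 𝔤] (s : VirS 𝔤) {θ : 𝔤 → 𝔤}
local notation "conj" => starRingEnd ℂ

lemma eig_support (T v : 𝔤) (lam : ℂ) (hv : ⁅T, v⁆ = lam • v) (ε k₀ : ℤ)
    (hε : ε = 1 ∨ ε = -1) (hk : 0 < ε * k₀)
    (hT : ∀ k, ε * k₀ < ε * k → s.b.repr T (.l k) = 0)
    (hTk : s.b.repr T (.l k₀) ≠ 0) :
    ∀ m, ε * k₀ < ε * m → s.b.repr v (.l m) = 0 := by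
  classical
  by_contra hcon
  push_neg at hcon
  obtain ⟨m₁, hm₁, hv₁⟩ := hcon
  let g : VirIx → ℤ := fun i => match i with | .l k => k | .c => k₀
  set S : Finset ℤ := ((s.b.repr v).support.image g).filter (fun m => ε * k₀ < ε * m) with hS
  have hm₁S : m₁ ∈ S := by
    rw [hS, Finset.mem_filter, Finset.mem_image]
    exact ⟨⟨.l m₁, Finsupp.mem_support_iff.mpr hv₁, rfl⟩, hm₁⟩
  obtain ⟨m₀, hm₀S, hmax⟩ := Finset.exists_max_image S (fun m => ε * m) ⟨m₁, hm₁S⟩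
  rw [hS, Finset.mem_filter] at hm₀S
  have hm₀gt : ε * k₀ < ε * m₀ := hm₀S.2
  have hvtop : ∀ m, ε * m₀ < ε * m → s.b.repr v (.l m) = 0 := by
    intro m hm
    by_contra h0
    have hmS : m ∈ S := by
      rw [hS, Finset.mem_filter, Finset.mem_image]
      exact ⟨⟨.l m, Finsupp.mem_support_iff.mpr h0, rfl⟩, lt_trans hm₀gt hm⟩
    exact absurd (hmax m hmS) (not_le.mpr hm)
  have hvm₀ : s.b.repr v (.l m₀) ≠ 0 := by
    obtain ⟨i, hi, hgi⟩ := Finset.mem_image.mp hm₀S.1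
    cases i with
    | l k =>
      have : k = m₀ := hgi
      rw [← this]
      exact Finsupp.mem_support_iff.mp hi
    | c =>
      have : k₀ = m₀ := hgi
      rw [this] at hm₀gt
      exact absurd hm₀gt (lt_irrefl _)
  have hb := repr_lie_of_support s T v k₀ m₀ ?_
  · rw [hv] at hb
    have hz : s.b.repr v (.l (k₀ + m₀)) = 0 := by
      apply hvtop
      rcases hε with rfl | rfl <;> omega
    rw [map_smul, Finsupp.smul_apply, hz, smul_zero] at hb
    have hm₀k₀ : m₀ ≠ k₀ := by rcases hε with rfl | rfl <;> omega
    have : ((m₀ : ℂ) - k₀) ≠ 0 := by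
      rw [sub_ne_zero]
      exact_mod_cast fun h => hm₀k₀ (by exact_mod_cast h)
    exact (mul_ne_zero (mul_ne_zero hTk hvm₀) this) hb.symm
  · intro k m hsum hne
    by_cases hklt : ε * k₀ < ε * k
    · exact Or.inl (hT k hklt)
    · refine Or.inr (hvtop m ?_)
      have : k ≠ k₀ := by
        intro h; exact hne ⟨h, by omega⟩
      rcases hε with rfl | rfl <;> omega

lemma lie_theta_L0_theta_L (hθ : IsConjAntiInvol 𝔤 θ) (n : ℤ) :
    ⁅θ (s.L 0), θ (s.L n)⁆ = (-(n : ℂ)) • θ (s.L n) := by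
  have h1 : ⁅s.L n, s.L 0⁆ = (-(n : ℂ)) • s.L n := by
    rw [VirS.L, VirS.L, s.bracket_LL]
    rcases eq_or_ne n 0 with rfl | hn
    · norm_num
    · rw [if_neg (by omega)]
      rw [add_zero, add_zero]
      push_cast
      ring_nf
  have h2 := hθ.map_bracket (s.L n) (s.L 0)
  rw [h1, hθ.map_smul] at h2
  rw [← h2]
  congr 1
  simp

lemma lie_theta_L0_theta_C (hθ : IsConjAntiInvol 𝔤 θ) :
    ⁅θ (s.L 0), θ s.C⁆ = 0 := by
  have h2 := hθ.map_bracket s.C (s.L 0)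
  rw [VirS.C, lie_c_left, theta_zero hθ] at h2
  exact h2.symm

lemma theta_L0_coords (hθ : IsConjAntiInvol 𝔤 θ) :
    ∀ k : ℤ, k ≠ 0 → s.b.repr (θ (s.L 0)) (.l k) = 0 := by
  classical
  by_contra hcon
  push_neg at hcon
  obtain ⟨k₁, hk₁, ht₁⟩ := hcon
  set t := s.b.repr (θ (s.L 0)) with hts
  let g : VirIx → ℤ := fun i => match i with | .l k => k | .c => 0
  set S : Finset ℤ := (t.support.image g).filter (fun k => k ≠ 0) with hS
  have hk₁S : k₁ ∈ S := by
    rw [hS, Finset.mem_filter, Finset.mem_image]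
    exact ⟨⟨.l k₁, Finsupp.mem_support_iff.mpr ht₁, rfl⟩, hk₁⟩
  obtain ⟨k₀, hk₀S, hmax⟩ := Finset.exists_max_image S (fun k => k.natAbs) ⟨k₁, hk₁S⟩
  rw [hS, Finset.mem_filter] at hk₀S
  have hk₀ : k₀ ≠ 0 := hk₀S.2
  have htk₀ : t (.l k₀) ≠ 0 := by
    obtain ⟨i, hi, hgi⟩ := Finset.mem_image.mp hk₀S.1
    cases i with
    | l k => rw [← show k = k₀ from hgi]; exact Finsupp.mem_support_iff.mp hi
    | c => exact absurd hgi.symm hk₀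
  set ε : ℤ := if 0 ≤ k₀ then 1 else -1 with hε'
  have hε : ε = 1 ∨ ε = -1 := by rw [hε']; split <;> simp
  have hk : 0 < ε * k₀ := by rw [hε']; split <;> omega
  have hT : ∀ k, ε * k₀ < ε * k → t (.l k) = 0 := by
    intro k hlt
    by_contra h0
    have hk0 : k ≠ 0 := by
      intro h; rw [h, mul_zero] at hlt; omega
    have hkS : k ∈ S := by
      rw [hS, Finset.mem_filter, Finset.mem_image]
      exact ⟨⟨.l k, Finsupp.mem_support_iff.mpr h0, rfl⟩, hk0⟩
    have := hmax k hkS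
    rw [hε'] at hlt
    split at hlt <;> omega
  -- all θ (basis) have zero coord at l (k₀ + ε)
  have hall : ∀ i : VirIx, s.b.repr (θ (s.b i)) (.l (k₀ + ε)) = 0 := by
    intro i
    have hgt : ε * k₀ < ε * (k₀ + ε) := by rcases hε with h | h <;> rw [h] <;> omega
    cases i with
    | l n =>
      exact eig_support s (θ (s.L 0)) (θ (s.L n)) (-(n:ℂ))
        (lie_theta_L0_theta_L s hθ n) ε k₀ hε hk hT htk₀ _ hgt
    | c =>
      refine eig_support s (θ (s.L 0)) (θ s.C) 0
        (by rw [lie_theta_L0_theta_C s hθ, zero_smul]) ε k₀ hε hk hT htk₀ _ hgt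
  have hone : s.b.repr (s.L (k₀ + ε)) (.l (k₀ + ε)) = 1 := by
    rw [VirS.L, Module.Basis.repr_self, Finsupp.single_apply, if_pos rfl]
  have hzero : s.b.repr (s.L (k₀ + ε)) (.l (k₀ + ε)) = 0 := by
    conv_lhs => rw [← hθ.invol (s.L (k₀ + ε))]
    rw [repr_theta s hθ]
    exact fsum_zero _ _ fun i _ => by rw [hall i, mul_zero]
  rw [hone] at hzero
  exact one_ne_zero hzero

end CP
end part3

section part4
namespace CP
open Finsupp
variable {𝔤 : Type*} [LieRing 𝔤] [LieAlgebra ℂ 𝔤] (s : VirS 𝔤) {θ : 𝔤 → 𝔤}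
local notation "conj" => starRingEnd ℂ

lemma eq_zero_of_repr (x : 𝔤) (h : ∀ j, s.b.repr x j = 0) : x = 0 := by
  have : s.b.repr x = 0 := Finsupp.ext h
  exact (LinearEquiv.map_eq_zero_iff _).mp this

lemma eq_smul_basis_of_coords (x : 𝔤) (i : VirIx) (h : ∀ j, j ≠ i → s.b.repr x j = 0) :
    x = s.b.repr x i • s.b i := by
  classical
  apply s.b.repr.injective
  rw [map_smul, Module.Basis.repr_self]
  ext j
  rcases eq_or_ne j i with rfl | hj
  · simp
  · rw [h j hj, Finsupp.smul_apply, Finsupp.single_apply, if_neg fun hh => hj hh.symm, smul_zero]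

lemma eq_two_coords (x : 𝔤) (h : ∀ k : ℤ, k ≠ 0 → s.b.repr x (.l k) = 0) :
    x = s.b.repr x (.l 0) • s.L 0 + s.b.repr x .c • s.C := by
  classical
  apply s.b.repr.injective
  rw [map_add, map_smul, map_smul, VirS.L, VirS.C, Module.Basis.repr_self, Module.Basis.repr_self]
  ext j
  rcases j with k | _
  · rcases eq_or_ne k 0 with rfl | hk
    · simp
    · rw [h k hk]
      simp only [Finsupp.add_apply, Finsupp.smul_apply, Finsupp.single_apply]
      rw [if_neg (by simp; omega), if_neg (by simp)]
      simp
  · simp [Finsupp.single_apply]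

/-- coefficient cancellation on a basis vector -/
lemma smul_basis_cancel (i : VirIx) (c d : ℂ) (h : c • s.b i = d • s.b i) : c = d := by
  have := congrArg (fun x => s.b.repr x i) h
  classical
  simpa [Module.Basis.repr_self, Finsupp.single_apply] using this

lemma smul_two_cancel (p q p' q' : ℂ) (h : p • s.L 0 + q • s.C = p' • s.L 0 + q' • s.C) :
    p = p' ∧ q = q' := by
  classical
  constructor
  · have := congrArg (fun x => s.b.repr x (.l 0)) h
    simpa [VirS.L, VirS.C, Module.Basis.repr_self, Finsupp.single_apply] using this
  · have := congrArg (fun x => s.b.repr x .c) h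
    simpa [VirS.L, VirS.C, Module.Basis.repr_self, Finsupp.single_apply] using this

end CP
end part4

section part5
namespace CP
open Finsupp
variable {𝔤 : Type*} [LieRing 𝔤] [LieAlgebra ℂ 𝔤] (s : VirS 𝔤) {θ : 𝔤 → 𝔤}
local notation "conj" => starRingEnd ℂ

lemma lie_LL (m n : ℤ) : ⁅s.L m, s.L n⁆ =
    ((n : ℂ) - (m : ℂ)) • s.L (m + n) +
      (if m + n = 0 then (((m : ℂ) ^ 3 - (m : ℂ)) / 12) • s.C else 0) :=
  s.bracket_LL m n

lemma smul_L_cancel (k : ℤ) (c d : ℂ) (h : c • s.L k = d • s.L k) : c = d :=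
  smul_basis_cancel s (.l k) c d h

lemma hθLne (hθ : IsConjAntiInvol 𝔤 θ) (n : ℤ) : θ (s.L n) ≠ 0 := by
  intro h
  exact Module.Basis.ne_zero s.b (.l n) (eq_zero_of_theta hθ h)

end CP
end part5


section mainproof
open CP
local notation "conj" => starRingEnd ℂ

/-- Lemma 2.3 (Chari-Pressley): any conjugate-linear anti-involution of the Virasoro
algebra is either `θ⁺_α` (`θ(L n) = αⁿ L₋ₙ`, `θ(C_L) = C_L`) for some nonzero real `α`,
or `θ⁻_α` (`θ(L n) = -αⁿ Lₙ`, `θ(C_L) = -C_L`) for some `α ∈ S¹`. -/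
theorem vir_conjAntiInvol_classification (𝔤 : Type*) [LieRing 𝔤] [LieAlgebra ℂ 𝔤]
    (s : VirS 𝔤) (θ : 𝔤 → 𝔤) (hθ : IsConjAntiInvol 𝔤 θ) :
    (∃ α : ℝ, α ≠ 0 ∧ (∀ n : ℤ, θ (s.L n) = ((α : ℂ) ^ n) • s.L (-n)) ∧ θ s.C = s.C) ∨
    (∃ α : ℂ, ‖α‖ = 1 ∧ (∀ n : ℤ, θ (s.L n) = -(α ^ n) • s.L n) ∧
      θ s.C = -s.C) := by
  classical
  set a : ℂ := s.b.repr (θ (s.L 0)) (.l 0) with ha_def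
  set bb : ℂ := s.b.repr (θ (s.L 0)) VirIx.c with hbb_def
  have hL0 : θ (s.L 0) = a • s.L 0 + bb • s.C :=
    eq_two_coords s (θ (s.L 0)) (theta_L0_coords s hθ)
  have hlie : ∀ x : 𝔤, ⁅θ (s.L 0), x⁆ = a • ⁅s.L 0, x⁆ := by
    intro x
    rw [hL0, add_lie, smul_lie, smul_lie, VirS.C, lie_c_left, smul_zero, add_zero]
  have heig : ∀ n : ℤ, a • ⁅s.L 0, θ (s.L n)⁆ = (-(n : ℂ)) • θ (s.L n) := fun n => by
    rw [← hlie, lie_theta_L0_theta_L s hθ n]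
  have heig_l : ∀ n m : ℤ, (a * m + n) * s.b.repr (θ (s.L n)) (.l m) = 0 := by
    intro n m
    have h := congrArg (fun x => s.b.repr x (.l m)) (heig n)
    simp only [map_smul, Finsupp.smul_apply, smul_eq_mul] at h
    rw [repr_lie_L0_l] at h
    linear_combination h
  have heig_c : ∀ n : ℤ, (n : ℂ) * s.b.repr (θ (s.L n)) VirIx.c = 0 := by
    intro n
    have h := congrArg (fun x => s.b.repr x VirIx.c) (heig n)
    simp only [map_smul, Finsupp.smul_apply, smul_eq_mul] at h
    rw [repr_lie_L0_c] at h
    linear_combination h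
  have ha : a ≠ 0 := by
    intro h0
    apply hθLne s hθ 1
    apply eq_zero_of_repr
    rintro (m | _)
    · have := heig_l 1 m
      rw [h0] at this
      simpa using this
    · simpa using heig_c 1
  have hcoordm : ∀ n m : ℤ, s.b.repr (θ (s.L n)) (.l m) ≠ 0 → a * m + n = 0 := by
    intro n m hm
    exact (mul_eq_zero.mp (heig_l n m)).resolve_right hm
  have hcoordc : ∀ n : ℤ, n ≠ 0 → s.b.repr (θ (s.L n)) VirIx.c = 0 := by
    intro n hn
    have := heig_c n
    exact (mul_eq_zero.mp this).resolve_left (Int.cast_ne_zero.mpr hn)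
  -- find m₁ with θ L 1 supported at m₁
  obtain ⟨m₁, hm₁⟩ : ∃ m : ℤ, s.b.repr (θ (s.L 1)) (.l m) ≠ 0 := by
    by_contra h
    push_neg at h
    apply hθLne s hθ 1
    apply eq_zero_of_repr
    rintro (m | _)
    · exact h m
    · exact hcoordc 1 one_ne_zero
  have ham1 : a * m₁ + 1 = 0 := by
    have := hcoordm 1 m₁ hm₁
    push_cast at this
    exact this
  have hm1ne : m₁ ≠ 0 := by
    intro h
    rw [h] at ham1
    simp at ham1
  have huniq : ∀ n m : ℤ, n ≠ 0 → s.b.repr (θ (s.L n)) (.l m) ≠ 0 → m = n * m₁ := by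
    intro n m hn hm
    have h1 : a * m + n = 0 := hcoordm n m hm
    have h2 : a * ((m : ℂ) - (n : ℂ) * m₁) = 0 := by ring_nf; linear_combination h1 - (n : ℂ) * ham1
    have h3 := (mul_eq_zero.mp h2).resolve_left ha
    have : (m : ℂ) = ((n * m₁ : ℤ) : ℂ) := by push_cast; linear_combination h3
    exact_mod_cast this
  set μ : ℤ → ℂ := fun n => s.b.repr (θ (s.L n)) (.l (n * m₁)) with hμ_def
  have hstruct : ∀ n : ℤ, n ≠ 0 → θ (s.L n) = μ n • s.L (n * m₁) := by
    intro n hn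
    have h := eq_smul_basis_of_coords s (θ (s.L n)) (.l (n * m₁)) ?_
    · exact h
    · rintro (m | _) hj
      · by_contra h0
        exact hj (by rw [huniq n m hn h0])
      · exact hcoordc n hn
  have hμne : ∀ n : ℤ, n ≠ 0 → μ n ≠ 0 := by
    intro n hn h0
    apply hθLne s hθ n
    rw [hstruct n hn, h0, zero_smul]
  -- m₁ * m₁ = 1
  have hm1sq : m₁ * m₁ = 1 := by
    by_contra hne
    have h1 : s.L 1 = θ (θ (s.L 1)) := (hθ.invol _).symm
    rw [hstruct 1 one_ne_zero, hθ.map_smul, one_mul, hstruct m₁ hm1ne] at h1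
    have := congrArg (fun x => s.b.repr x (.l 1)) h1
    simp only [map_smul, Finsupp.smul_apply, smul_eq_mul, VirS.L, Module.Basis.repr_self] at this
    rw [Finsupp.single_apply, Finsupp.single_apply, if_pos rfl,
      if_neg (by simp only [VirIx.l.injEq]; exact hne)] at this
    simp at this
  have hσ2 : (m₁ : ℂ) * (m₁ : ℂ) = 1 := by exact_mod_cast congrArg (Int.cast : ℤ → ℂ) hm1sq
  have hσne : (m₁ : ℂ) ≠ 0 := Int.cast_ne_zero.mpr hm1ne
  have haσ : a = -(m₁ : ℂ) := by linear_combination (m₁ : ℂ) * ham1 - a * hσ2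
  have hJ : ∀ n : ℤ, n ≠ 0 → conj (μ n) * μ (n * m₁) = 1 := by
    intro n hn
    have h1 : s.L n = θ (θ (s.L n)) := (hθ.invol _).symm
    rw [hstruct n hn, hθ.map_smul, hstruct (n * m₁) (mul_ne_zero hn hm1ne), smul_smul] at h1
    rw [show n * m₁ * m₁ = n by rw [mul_assoc, hm1sq, mul_one]] at h1
    have h2 : (1 : ℂ) • s.L n = (conj (μ n) * μ (n * m₁)) • s.L n := by
      rw [one_smul]; exact h1
    exact (smul_L_cancel s n _ _ h2).symm
  -- θ C analysis
  have hwθ : ∀ y : 𝔤, ⁅θ s.C, θ y⁆ = 0 := by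
    intro y
    have h := hθ.map_bracket y s.C
    rw [show ⁅y, s.C⁆ = 0 from s.central_C y, theta_zero hθ] at h
    exact h.symm
  have hwL1 : ⁅θ s.C, s.L 1⁆ = 0 := by
    have := hwθ (θ (s.L 1))
    rwa [hθ.invol] at this
  have hwl : ∀ m : ℤ, m ≠ 0 → s.b.repr (θ s.C) (.l m) = 0 := by
    intro m hm
    have h0 : a • ⁅s.L 0, θ s.C⁆ = 0 := by rw [← hlie, lie_theta_L0_theta_C s hθ]
    have h1 : ⁅s.L 0, θ s.C⁆ = 0 := (smul_eq_zero.mp h0).resolve_left ha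
    have h2 := repr_lie_L0_l s (θ s.C) m
    rw [h1, map_zero] at h2
    have h3 : (0 : ℂ) = (m : ℂ) * s.b.repr (θ s.C) (.l m) := h2
    exact ((mul_eq_zero.mp h3.symm).resolve_left (Int.cast_ne_zero.mpr hm))
  have hCform : θ s.C = (s.b.repr (θ s.C) (.l 0)) • s.L 0 + (s.b.repr (θ s.C) VirIx.c) • s.C :=
    eq_two_coords s _ hwl
  set w0 : ℂ := s.b.repr (θ s.C) (.l 0) with hw0_def
  set lam : ℂ := s.b.repr (θ s.C) VirIx.c with hlam_def
  have hw0 : w0 = 0 := by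
    rw [hCform, add_lie, smul_lie, smul_lie, show ⁅s.C, s.L 1⁆ = 0 from lie_c_left s _,
      smul_zero, add_zero, lie_LL] at hwL1
    rw [show (0 : ℤ) + 1 = 1 by norm_num, if_neg (by norm_num)] at hwL1
    norm_num at hwL1
    exact hwL1.resolve_right (Module.Basis.ne_zero s.b (.l 1))
  have hC : θ s.C = lam • s.C := by rw [hCform, hw0, zero_smul, zero_add]
  have hlam1 : conj lam * lam = 1 := by
    have h1 : s.C = θ (θ s.C) := (hθ.invol _).symm
    rw [hC, hθ.map_smul, hC, smul_smul] at h1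
    have h2 : (1 : ℂ) • s.C = (conj lam * lam) • s.C := by rw [one_smul]; exact h1
    exact (smul_basis_cancel s VirIx.c _ _ h2).symm
  -- relations from ⁅L m, L (-m)⁆
  have hrel2 : ∀ m : ℤ, m ≠ 0 → μ m * μ (-m) = 1 ∧
      -2*(m:ℂ)*bb + (((m:ℂ)^3 - m)/12) * lam = -(m₁:ℂ) * (((m:ℂ)^3 - m)/12) := by
    intro m hm
    have hb := hθ.map_bracket (s.L m) (s.L (-m))
    rw [lie_LL, show m + -m = 0 by omega, if_pos rfl] at hb
    rw [hθ.map_add, hθ.map_smul, hθ.map_smul, hL0, hC] at hb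
    rw [hstruct (-m) (neg_ne_zero.mpr hm), hstruct m hm] at hb
    rw [smul_lie, lie_smul, lie_LL] at hb
    rw [show -m * m₁ + m * m₁ = 0 by ring, if_pos rfl] at hb
    have h0 := congrArg (fun x => s.b.repr x (.l 0)) hb
    have hcc := congrArg (fun x => s.b.repr x VirIx.c) hb
    simp only [map_add, map_smul, Finsupp.smul_apply, Finsupp.add_apply, smul_eq_mul,
      VirS.L, VirS.C, Module.Basis.repr_self, Finsupp.single_apply, if_pos rfl, reduceCtorEq,
      if_false, map_sub, map_neg, map_intCast, map_div₀, map_pow, map_ofNat,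
      mul_zero, mul_one, zero_add, add_zero, if_true] at h0 hcc
    push_cast at h0 hcc
    have hmm1 : μ m * μ (-m) = 1 := by
      have hne2 : (2*(m:ℂ)*(m₁:ℂ)) ≠ 0 :=
        mul_ne_zero (mul_ne_zero two_ne_zero (Int.cast_ne_zero.mpr hm)) hσne
      apply mul_left_cancel₀ hne2
      linear_combination -h0 - 2*(m:ℂ)*haσ
    refine ⟨hmm1, ?_⟩
    linear_combination hcc - ((m:ℂ)^3 * μ (-m) * μ m * (m₁:ℂ)/12) * hσ2 + ((m₁:ℂ)*((m:ℂ) - (m:ℂ)^3)/12) * hmm1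
  have hμinv : ∀ m : ℤ, m ≠ 0 → μ m * μ (-m) = 1 := fun m hm => (hrel2 m hm).1
  have hbb : bb = 0 := by
    have h := (hrel2 1 one_ne_zero).2
    norm_num at h
    exact h
  have hlamσ : lam = -(m₁ : ℂ) := by
    have h := (hrel2 2 two_ne_zero).2
    rw [hbb] at h
    norm_num at h
    linear_combination 2 * h
  -- multiplicativity
  have hmul : ∀ m n : ℤ, m ≠ 0 → n ≠ 0 → m + n ≠ 0 → m ≠ n →
      μ (m + n) = -(m₁ : ℂ) * (μ m * μ n) := by
    intro m n hm hn hmn hne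
    have hb := hθ.map_bracket (s.L m) (s.L n)
    rw [lie_LL, if_neg hmn, add_zero, hθ.map_smul] at hb
    rw [hstruct (m + n) hmn, hstruct m hm, hstruct n hn, smul_lie, lie_smul, lie_LL] at hb
    rw [show n * m₁ + m * m₁ = (m + n) * m₁ by ring,
      if_neg (fun hc => hmn ((mul_eq_zero.mp hc).resolve_right hm1ne)), add_zero] at hb
    rw [smul_smul, smul_smul, smul_smul] at hb
    have hcan := smul_L_cancel s ((m + n) * m₁) _ _ hb
    have hconj : conj ((n : ℂ) - (m : ℂ)) = (n : ℂ) - (m : ℂ) := by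
      rw [map_sub, map_intCast, map_intCast]
    rw [hconj] at hcan
    have hne' : (n : ℂ) - (m : ℂ) ≠ 0 := by
      rw [sub_ne_zero]
      exact fun h => hne (by exact_mod_cast h.symm)
    apply mul_left_cancel₀ hne'
    push_cast at hcan ⊢
    linear_combination hcan
  -- powers
  set A : ℂ := -(m₁ : ℂ) * μ 1 with hA_def
  have hAne : A ≠ 0 := mul_ne_zero (neg_ne_zero.mpr hσne) (hμne 1 one_ne_zero)
  have hmulν : ∀ m n : ℤ, m ≠ 0 → n ≠ 0 → m + n ≠ 0 → m ≠ n →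
      -(m₁ : ℂ) * μ (m + n) = (-(m₁ : ℂ) * μ m) * (-(m₁ : ℂ) * μ n) := by
    intro m n hm hn hmn hne
    have h := hmul m n hm hn hmn hne
    linear_combination (-(m₁:ℂ)) * h + (μ m * μ n * (m₁:ℂ)) * hσ2 - (μ m * μ n * (m₁:ℂ)) * hσ2
  have hν2 : -(m₁ : ℂ) * μ 2 = A * A := by
    have e13 : -(m₁ : ℂ) * μ 4 = (-(m₁:ℂ) * μ 1) * (-(m₁:ℂ) * μ 3) := by
      have h := hmulν 1 3 one_ne_zero (by norm_num) (by norm_num) (by norm_num)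
      rw [show (1:ℤ) + 3 = 4 by norm_num] at h
      exact h
    have e12 : -(m₁ : ℂ) * μ 3 = (-(m₁:ℂ) * μ 1) * (-(m₁:ℂ) * μ 2) := by
      have h := hmulν 1 2 one_ne_zero (by norm_num) (by norm_num) (by norm_num)
      rw [show (1:ℤ) + 2 = 3 by norm_num] at h
      exact h
    have e14 : -(m₁ : ℂ) * μ 5 = (-(m₁:ℂ) * μ 1) * (-(m₁:ℂ) * μ 4) := by
      have h := hmulν 1 4 one_ne_zero (by norm_num) (by norm_num) (by norm_num)
      rw [show (1:ℤ) + 4 = 5 by norm_num] at h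
      exact h
    have e23 : -(m₁ : ℂ) * μ 5 = (-(m₁:ℂ) * μ 2) * (-(m₁:ℂ) * μ 3) := by
      have h := hmulν 2 3 (by norm_num) (by norm_num) (by norm_num) (by norm_num)
      rw [show (2:ℤ) + 3 = 5 by norm_num] at h
      exact h
    have hν3ne : -(m₁:ℂ) * μ 3 ≠ 0 :=
      mul_ne_zero (neg_ne_zero.mpr hσne) (hμne 3 (by norm_num))
    apply mul_right_cancel₀ hν3ne
    calc (-(m₁:ℂ) * μ 2) * (-(m₁:ℂ) * μ 3) = -(m₁:ℂ) * μ 5 := e23.symm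
      _ = (-(m₁:ℂ) * μ 1) * (-(m₁:ℂ) * μ 4) := e14
      _ = (-(m₁:ℂ) * μ 1) * ((-(m₁:ℂ) * μ 1) * (-(m₁:ℂ) * μ 3)) := by rw [← e13]
      _ = (A * A) * (-(m₁:ℂ) * μ 3) := by rw [hA_def]; ring
  have hνnat : ∀ k : ℕ, -(m₁:ℂ) * μ ((k : ℤ) + 1) = A ^ (k + 1) := by
    intro k
    induction k with
    | zero => rw [hA_def]; norm_num
    | succ k ih =>
      rcases Nat.eq_zero_or_pos k with rfl | hk
      · push_cast
        norm_num [pow_succ]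
        linear_combination hν2
      · have h := hmulν 1 ((k:ℤ) + 1) one_ne_zero (by omega) (by omega) (by omega)
        rw [show (1:ℤ) + ((k:ℤ) + 1) = ((k+1:ℕ):ℤ) + 1 by push_cast; ring] at h
        rw [h, ih, hA_def, pow_succ]
        ring
  have hνall : ∀ n : ℤ, n ≠ 0 → -(m₁:ℂ) * μ n = A ^ n := by
    intro n hn
    rcases lt_or_gt_of_ne hn with hneg | hpos
    · have hpos' : -(m₁:ℂ) * μ (-n) = A ^ (-n) := by
        obtain ⟨k, hk⟩ : ∃ k : ℕ, -n = (k:ℤ) + 1 := ⟨(-n - 1).toNat, by omega⟩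
        rw [hk, show ((k:ℤ) + 1) = ((k+1:ℕ):ℤ) by push_cast; ring, zpow_natCast]
        exact_mod_cast hνnat k
      have hprod : (-(m₁:ℂ) * μ n) * (-(m₁:ℂ) * μ (-n)) = 1 := by
        linear_combination ((m₁:ℂ)*(m₁:ℂ)) * (hμinv n hn) + hσ2
      have heq := eq_inv_of_mul_eq_one_left hprod
      rw [heq, hpos', ← zpow_neg, neg_neg]
    · obtain ⟨k, hk⟩ : ∃ k : ℕ, n = (k:ℤ) + 1 := ⟨(n - 1).toNat, by omega⟩
      rw [hk, show ((k:ℤ) + 1) = ((k+1:ℕ):ℤ) by push_cast; ring, zpow_natCast]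
      exact_mod_cast hνnat k
  clear_value μ A a bb lam w0
  clear hμ_def ha_def hbb_def hw0_def hlam_def hm₁ huniq hcoordm hcoordc heig heig_l heig_c
    hlie hwθ hwL1 hwl hCform hw0 ham1 hrel2 hmul hmulν hν2 hνnat
  rcases mul_self_eq_one_iff.mp hm1sq with rfl | rfl
  · -- σ = 1 : type (ii)
    right
    have h1 := hJ 1 one_ne_zero
    rw [show (1:ℤ) * 1 = 1 by norm_num] at h1
    have hA1 : A = -μ 1 := by rw [hA_def]; push_cast; ring
    refine ⟨A, ?_, ?_, ?_⟩
    · have hnsq : (Complex.normSq (μ 1) : ℂ) = 1 := by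
        rw [← Complex.mul_conj]; linear_combination h1
      have hnsq' : Complex.normSq (μ 1) = 1 := by exact_mod_cast hnsq
      rw [hA1, norm_neg, Complex.norm_def, hnsq', Real.sqrt_one]
    · intro n
      rcases eq_or_ne n 0 with rfl | hn
      · rw [zpow_zero, hL0, haσ, hbb]
        push_cast
        simp
      · rw [hstruct n hn, show n * 1 = n by ring]
        have h := hνall n hn
        push_cast at h
        have hμn : μ n = -(A ^ n) := by linear_combination -h
        rw [hμn]
    · rw [hC, hlamσ]
      push_cast
      simp
  · -- σ = -1 : type (i)
    left
    have hA1 : A = μ 1 := by rw [hA_def]; push_cast; ring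
    have hconj1 : conj (μ 1) = μ 1 := by
      have h1 := hJ 1 one_ne_zero
      rw [show (1:ℤ) * -1 = -1 by norm_num] at h1
      have h2 := hμinv 1 one_ne_zero
      apply mul_right_cancel₀ (hμne (-1) (by norm_num))
      rw [h1, h2]
    obtain ⟨α, hα⟩ : ∃ r : ℝ, (r : ℂ) = μ 1 := ⟨(μ 1).re, Complex.conj_eq_iff_re.mp hconj1⟩
    refine ⟨α, ?_, ?_, ?_⟩
    · intro h0
      rw [h0] at hα
      exact hμne 1 one_ne_zero (by exact_mod_cast hα.symm)
    · intro n
      rcases eq_or_ne n 0 with rfl | hn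
      · rw [neg_zero, zpow_zero, one_smul, hL0, haσ, hbb]
        push_cast
        simp
      · rw [hstruct n hn, show n * -1 = -n by ring]
        have h := hνall n hn
        push_cast at h
        rw [hA1, ← hα] at h
        have hμn : μ n = ((α:ℂ)) ^ n := by linear_combination h
        rw [hμn]
    · rw [hC, hlamσ]
      push_cast
      simp

end mainproof
end

section
/- For a, b ∈ ℂ, the Vir-module A_{a,b} is not simple if and only if a ∈ ℤ and b ∈ {0, 1}. -/
/-- The intermediate series module `A_{a,b}` over the Virasoro algebra is not simple
if and only if `a ∈ ℤ` and `b ∈ {0, 1}`. -/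
theorem Aab_not_simple_iff (𝔤 : Type*) [LieRing 𝔤] [LieAlgebra ℂ 𝔤] (s : VirS 𝔤)
    (V : Type*) [AddCommGroup V] [Module ℂ V] [LieRingModule 𝔤 V] [LieModule ℂ 𝔤 V]
    (a b : ℂ) (v : Module.Basis ℤ ℂ V)
    (hL : ∀ n k : ℤ, ⁅s.L n, v k⁆ = (a + (k : ℂ) + (n : ℂ) * b) • v (n + k))
    (hC : ∀ k : ℤ, ⁅s.C, v k⁆ = 0) :
    ¬ LieModule.IsIrreducible ℂ 𝔤 V ↔ ((∃ n : ℤ, a = (n : ℂ)) ∧ (b = 0 ∨ b = 1)) := by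
  classical
  constructor
  · -- not irreducible → a ∈ ℤ and b ∈ {0,1}
    intro hnot
    by_contra hrhs
    apply hnot
    -- from ¬rhs we get the dichotomy
    have haI : (∀ n : ℤ, a ≠ (n : ℂ)) ∨ (b ≠ 0 ∧ b ≠ 1) := by
      by_cases hA : ∃ n : ℤ, a = (n : ℂ)
      · right
        constructor
        · intro hb0; exact hrhs ⟨hA, Or.inl hb0⟩
        · intro hb1; exact hrhs ⟨hA, Or.inr hb1⟩
      · left; push_neg at hA; exact hA
    -- coordinates of the action of L 0
    have coordL0 : ∀ (x : V) (k : ℤ),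
        v.repr ⁅s.L 0, x⁆ k = (a + (k : ℂ)) * v.repr x k := by
      intro x k
      have hmaps : (v.coord k).comp ((LieModule.toEnd ℂ 𝔤 V (s.L 0) : V →ₗ[ℂ] V))
          = (a + (k : ℂ)) • v.coord k := by
        apply v.ext
        intro j
        have : ⁅s.L 0, v j⁆ = (a + (j : ℂ)) • v j := by
          have := hL 0 j
          simpa using this
        by_cases hjk : j = k
        · subst hjk
          simp [this, Module.Basis.coord_apply, Module.Basis.repr_self, LieModule.toEnd_apply_apply]
        · simp [this, Module.Basis.coord_apply, Module.Basis.repr_self, Finsupp.single_apply, hjk,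
            LieModule.toEnd_apply_apply]
      have := LinearMap.congr_fun hmaps x
      simpa [Module.Basis.coord_apply, LieModule.toEnd_apply_apply, mul_comm] using this
    have hVnt : (⊥ : LieSubmodule ℂ 𝔤 V) ≠ ⊤ := by
      intro hbt
      have h0 : v 0 ∈ (⊥ : LieSubmodule ℂ 𝔤 V) := by rw [hbt]; trivial
      have : v 0 = (0 : V) := by simpa using h0
      exact v.ne_zero 0 this
    haveI : Nontrivial (LieSubmodule ℂ 𝔤 V) := ⟨⟨⊥, ⊤, hVnt⟩⟩
    constructor
    intro W
    by_cases hWbot : W = ⊥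
    · exact Or.inl hWbot
    right
    -- step lemma
    have step : ∀ (k m : ℤ), v k ∈ W → a + (k : ℂ) + (m : ℂ) * b ≠ 0 →
        v (m + k) ∈ W := by
      intro k m hk hne
      have hmem : ⁅s.L m, v k⁆ ∈ W := W.lie_mem hk
      rw [hL m k] at hmem
      have := W.smul_mem ((a + (k : ℂ) + (m : ℂ) * b)⁻¹) hmem
      rwa [smul_smul, inv_mul_cancel₀ hne, one_smul] at this
    -- some basis vector belongs to W
    have hWex : ∃ w ∈ W, w ≠ (0 : V) := by
      by_contra hc
      push_neg at hc
      exact hWbot (LieSubmodule.eq_bot_iff W |>.2 (fun m hm => hc m hm))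
    obtain ⟨w, hwW, hw0⟩ := hWex
    have exBasis : ∃ k : ℤ, v k ∈ W := by
      have main : ∀ N : ℕ, ∀ x : V, x ∈ W → x ≠ 0 →
          (v.repr x).support.card ≤ N → ∃ k : ℤ, v k ∈ W := by
        intro N
        induction N with
        | zero =>
          intro x hxW hx0 hcard
          exfalso
          have hsupp : (v.repr x).support = ∅ := by
            have := Nat.le_zero.mp hcard
            exact Finset.card_eq_zero.mp this
          have : v.repr x = 0 := Finsupp.support_eq_empty.mp hsupp
          exact hx0 (v.repr.map_eq_zero_iff.mp this)
        | succ N ih =>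
          intro x hxW hx0 hcard
          have hne : (v.repr x).support.Nonempty := by
            rw [Finsupp.support_nonempty_iff]
            exact fun h => hx0 (v.repr.map_eq_zero_iff.mp h)
          by_cases hone : (v.repr x).support.card = 1
          · obtain ⟨k₀, hk0ne, hrepr⟩ := Finsupp.card_support_eq_one.mp hone
            have hx : ∃ c : ℂ, c ≠ 0 ∧ x = c • v k₀ := by
              refine ⟨v.repr x k₀, hk0ne, ?_⟩
              apply v.repr.injective
              rw [map_smul, Module.Basis.repr_self]
              conv_lhs => rw [hrepr]
              rw [Finsupp.smul_single, smul_eq_mul, mul_one]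
            obtain ⟨c, hc0, rfl⟩ := hx
            refine ⟨k₀, ?_⟩
            have hmem := W.smul_mem c⁻¹ hxW
            rwa [smul_smul, inv_mul_cancel₀ hc0, one_smul] at hmem
          · -- at least two support elements
            have h2 : 1 < (v.repr x).support.card := by
              have := Finset.card_pos.mpr hne
              omega
            obtain ⟨k₀, hk₀, k₁, hk₁, hk01⟩ := Finset.one_lt_card.mp h2
            set u : V := ⁅s.L 0, x⁆ - (a + (k₀ : ℂ)) • x with hu
            have huW : u ∈ W := by
              apply W.sub_mem (W.lie_mem hxW) (W.smul_mem _ hxW)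
            have hurepr : ∀ k : ℤ, v.repr u k = ((k : ℂ) - (k₀ : ℂ)) * v.repr x k := by
              intro k
              rw [hu]
              simp only [map_sub, map_smul, Finsupp.sub_apply, Finsupp.smul_apply,
                coordL0, smul_eq_mul]
              ring
            have hu0 : u ≠ 0 := by
              intro h
              have : v.repr u k₁ = 0 := by rw [h]; simp
              rw [hurepr k₁] at this
              rcases mul_eq_zero.mp this with h' | h'
              · have : (k₁ : ℂ) = (k₀ : ℂ) := by linear_combination h'
                exact hk01 (by exact_mod_cast this.symm)
              · exact (Finsupp.mem_support_iff.mp hk₁) h'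
            have hsubset : (v.repr u).support ⊆ (v.repr x).support.erase k₀ := by
              intro k hk
              rw [Finsupp.mem_support_iff, hurepr k] at hk
              rcases mul_ne_zero_iff.mp hk with ⟨h1, h2⟩
              refine Finset.mem_erase.mpr ⟨?_, Finsupp.mem_support_iff.mpr h2⟩
              intro hkk0
              apply h1
              rw [hkk0]; ring
            have hcard' : (v.repr u).support.card ≤ N := by
              calc (v.repr u).support.card ≤ ((v.repr x).support.erase k₀).card :=
                    Finset.card_le_card hsubset
                _ = (v.repr x).support.card - 1 := Finset.card_erase_of_mem hk₀
                _ ≤ N := by omega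
            exact ih u huW hu0 hcard'
      exact main (v.repr w).support.card w hwW hw0 le_rfl
    obtain ⟨k₀, hk₀W⟩ := exBasis
    -- reach every basis vector
    have reach : ∀ j : ℤ, v j ∈ W := by
      intro j
      by_cases hb0 : b = 0
      · -- then a ∉ ℤ
        have haZ : ∀ n : ℤ, a ≠ (n : ℂ) := by
          rcases haI with h | h
          · exact h
          · exact absurd hb0 h.1
        have hne : a + (k₀ : ℂ) + ((j - k₀ : ℤ) : ℂ) * b ≠ 0 := by
          rw [hb0, mul_zero, add_zero]
          intro h
          exact haZ (-k₀) (by push_cast; linear_combination h)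
        have := step k₀ (j - k₀) hk₀W hne
        simpa using this
      by_cases hb1 : b = 1
      · have haZ : ∀ n : ℤ, a ≠ (n : ℂ) := by
          rcases haI with h | h
          · exact h
          · exact absurd hb1 h.2
        have hne : a + (k₀ : ℂ) + ((j - k₀ : ℤ) : ℂ) * b ≠ 0 := by
          rw [hb1, mul_one]
          intro h
          exact haZ (-j) (by push_cast; push_cast at h; linear_combination h)
        have := step k₀ (j - k₀) hk₀W hne
        simpa using this
      · -- b ∉ {0,1}: two-step argument
        have hPu : ∀ m m' : ℤ, a + (k₀ : ℂ) + (m : ℂ) * b = 0 →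
            a + (k₀ : ℂ) + (m' : ℂ) * b = 0 → m = m' := by
          intro m m' h h'
          have : ((m : ℂ) - (m' : ℂ)) * b = 0 := by linear_combination h - h'
          rcases mul_eq_zero.mp this with h'' | h''
          · have : (m : ℂ) = (m' : ℂ) := by linear_combination h''
            exact_mod_cast this
          · exact absurd h'' hb0
        have hQu : ∀ m m' : ℤ, a + (j : ℂ) * b + ((k₀ + m : ℤ) : ℂ) * (1 - b) = 0 →
            a + (j : ℂ) * b + ((k₀ + m' : ℤ) : ℂ) * (1 - b) = 0 → m = m' := by
          intro m m' h h'
          have : ((m : ℂ) - (m' : ℂ)) * (1 - b) = 0 := by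
            push_cast at h h'
            linear_combination h - h'
          rcases mul_eq_zero.mp this with h'' | h''
          · have : (m : ℂ) = (m' : ℂ) := by linear_combination h''
            exact_mod_cast this
          · exact absurd (by linear_combination -h'') hb1
        -- find a good m among 0, 1, 2
        have hexm : ∃ m : ℤ, a + (k₀ : ℂ) + (m : ℂ) * b ≠ 0 ∧
            a + (j : ℂ) * b + ((k₀ + m : ℤ) : ℂ) * (1 - b) ≠ 0 := by
          by_contra hc
          push_neg at hc
          by_cases p0 : a + (k₀ : ℂ) + ((0 : ℤ) : ℂ) * b = 0
          all_goals (
            by_cases p1 : a + (k₀ : ℂ) + ((1 : ℤ) : ℂ) * b = 0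
            all_goals (
              by_cases p2 : a + (k₀ : ℂ) + ((2 : ℤ) : ℂ) * b = 0
              all_goals (
                first
                | exact absurd (hPu 0 1 p0 p1) (by norm_num)
                | exact absurd (hPu 0 2 p0 p2) (by norm_num)
                | exact absurd (hPu 1 2 p1 p2) (by norm_num)
                | exact absurd (hQu 0 1 (hc 0 p0) (hc 1 p1)) (by norm_num)
                | exact absurd (hQu 0 2 (hc 0 p0) (hc 2 p2)) (by norm_num)
                | exact absurd (hQu 1 2 (hc 1 p1) (hc 2 p2)) (by norm_num))))
        obtain ⟨m, hPm, hQm⟩ := hexm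
        have h1 : v (m + k₀) ∈ W := step k₀ m hk₀W hPm
        have hne2 : a + ((m + k₀ : ℤ) : ℂ) + ((j - (m + k₀) : ℤ) : ℂ) * b ≠ 0 := by
          intro h
          apply hQm
          push_cast at h ⊢
          linear_combination h
        have := step (m + k₀) (j - (m + k₀)) h1 hne2
        simpa using this
    -- conclude W = ⊤
    rw [eq_top_iff]
    rintro x -
    have hx : x ∈ Submodule.span ℂ (Set.range v) := by rw [v.span_eq]; trivial
    have hle : Submodule.span ℂ (Set.range v) ≤ (W : Submodule ℂ V) := by
      rw [Submodule.span_le]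
      rintro _ ⟨j, rfl⟩
      exact reach j
    exact hle hx
  · -- a ∈ ℤ and b ∈ {0,1} → not irreducible
    rintro ⟨⟨n, rfl⟩, hb⟩ hirr
    rcases hb with hb0 | hb1
    · -- b = 0: ℂ • v(-n) is a proper nonzero submodule
      subst hb0
      let f : 𝔤 →ₗ[ℂ] V :=
        { toFun := fun g => ⁅g, v (-n)⁆
          map_add' := fun x y => add_lie x y (v (-n))
          map_smul' := fun c x => smul_lie c x (v (-n)) }
      have hzero : ∀ g : 𝔤, ⁅g, v (-n)⁆ = 0 := by
        have hf : f = 0 := by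
          apply s.b.ext
          intro ix
          rw [LinearMap.zero_apply]
          cases ix with
          | l m =>
            show ⁅s.b (.l m), v (-n)⁆ = 0
            have := hL m (-n)
            rw [show s.L m = s.b (.l m) from rfl] at this
            rw [this]
            have : ((n : ℂ) + ((-n : ℤ) : ℂ) + (m : ℂ) * 0) = 0 := by push_cast; ring
            rw [this, zero_smul]
          | c =>
            show ⁅s.b .c, v (-n)⁆ = 0
            have := hC (-n)
            rwa [show s.C = s.b .c from rfl] at this
        intro g
        have h := LinearMap.congr_fun hf g
        rw [LinearMap.zero_apply] at h
        exact h
      set W : LieSubmodule ℂ 𝔤 V :=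
        { toSubmodule := Submodule.span ℂ {v (-n)}
          lie_mem := by
            intro x m hm
            have hm' : m ∈ Submodule.span ℂ {v (-n)} := hm
            rw [Submodule.mem_span_singleton] at hm'
            obtain ⟨c, rfl⟩ := hm'
            show ⁅x, c • v (-n)⁆ ∈ Submodule.span ℂ {v (-n)}
            rw [lie_smul, hzero x, smul_zero]
            exact Submodule.zero_mem _ } with hW
      rcases hirr.eq_bot_or_eq_top W with h | h
      · have : v (-n) ∈ W := by
          show v (-n) ∈ Submodule.span ℂ {v (-n)}
          exact Submodule.mem_span_singleton_self _
        rw [h] at this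
        exact v.ne_zero (-n) (by simpa using this)
      · have : v (-n + 1) ∈ W := by rw [h]; trivial
        have hmem : v (-n + 1) ∈ Submodule.span ℂ {v (-n)} := this
        rw [Submodule.mem_span_singleton] at hmem
        obtain ⟨c, hc⟩ := hmem
        have := congrArg (fun x => v.repr x (-n + 1)) hc
        simp [Module.Basis.repr_self, Finsupp.single_apply] at this
    · -- b = 1: {x | repr x (-n) = 0} is a proper nonzero submodule
      subst hb1
      let Φ : 𝔤 →ₗ[ℂ] V →ₗ[ℂ] ℂ :=
        { toFun := fun g => (v.coord (-n)).comp
            ((LieModule.toEnd ℂ 𝔤 V g : V →ₗ[ℂ] V))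
          map_add' := by intro x y; ext u; simp [LieModule.toEnd_apply_apply]
          map_smul' := by intro c x; ext u; simp [LieModule.toEnd_apply_apply] }
      have hcoord : ∀ (g : 𝔤) (x : V), v.repr ⁅g, x⁆ (-n) = 0 := by
        have hΦ : Φ = 0 := by
          apply s.b.ext
          intro ix
          rw [LinearMap.zero_apply]
          apply v.ext
          intro k
          rw [LinearMap.zero_apply]
          cases ix with
          | l m =>
            show v.coord (-n) ⁅s.b (.l m), v k⁆ = 0
            have := hL m k
            rw [show s.L m = s.b (.l m) from rfl] at this
            rw [this]
            by_cases hmk : m + k = -n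
            · have hc0 : ((n : ℂ) + (k : ℂ) + (m : ℂ) * 1) = 0 := by
                have : ((m : ℤ) : ℂ) + (k : ℂ) = ((-n : ℤ) : ℂ) := by exact_mod_cast congrArg (fun z : ℤ => (z : ℂ)) hmk
                push_cast at this ⊢
                linear_combination this
              rw [hc0, zero_smul]
              simp
            · simp only [map_smul, Module.Basis.coord_apply, Module.Basis.repr_self, smul_eq_mul,
                Finsupp.single_apply]
              rw [if_neg hmk, mul_zero]
          | c =>
            show v.coord (-n) ⁅s.b .c, v k⁆ = 0
            have := hC k
            rw [show s.C = s.b .c from rfl] at this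
            rw [this]
            simp
        intro g x
        have h := LinearMap.congr_fun (LinearMap.congr_fun hΦ g) x
        simp only [LinearMap.zero_apply] at h
        have h2 : v.coord (-n) ⁅g, x⁆ = 0 := h
        rwa [Module.Basis.coord_apply] at h2
      set W : LieSubmodule ℂ 𝔤 V :=
        { toSubmodule := LinearMap.ker (v.coord (-n))
          lie_mem := by
            intro x m hm
            show ⁅x, m⁆ ∈ LinearMap.ker (v.coord (-n))
            rw [LinearMap.mem_ker, Module.Basis.coord_apply]
            exact hcoord x m } with hW
      rcases hirr.eq_bot_or_eq_top W with h | h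
      · have : v (-n + 1) ∈ W := by
          show v (-n + 1) ∈ LinearMap.ker (v.coord (-n))
          rw [LinearMap.mem_ker, Module.Basis.coord_apply, Module.Basis.repr_self,
            Finsupp.single_apply, if_neg (by omega)]
        rw [h] at this
        exact v.ne_zero (-n + 1) (by simpa using this)
      · have : v (-n) ∈ W := by rw [h]; trivial
        have hmem : v (-n) ∈ LinearMap.ker (v.coord (-n)) := this
        rw [LinearMap.mem_ker, Module.Basis.coord_apply, Module.Basis.repr_self] at hmem
        simp at hmem
end
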